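/- arXiv:2001.07260 — 3 statements merged into one kernel-verified Lean document; each statement's English description precedes it below -/
import Mathlib

section
/- Vertical i-pairing is well-defined and the raising operator e_i on diagrams, which pushes the rightmost vertically unpaired box in row i+1 down to row i, is injective on the set of diagrams where it is nonzero: if e_i(D) = e_i(D') ≠ 0 then D = D'. -/
open scoped Classical

/-- A Kohnert move: take the rightmost cell of row `r` and move it down in its
column to the highest open row `r'` below (rows indexed from 1). Cells are `(row, column)`. -/
def KohnertMove (D D' : Finset (ℕ × ℕ)) : Prop :=
  ∃ r c r', (r, c) ∈ D ∧ (∀ c', (r, c') ∈ D → c' ≤ c) ∧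
    1 ≤ r' ∧ r' < r ∧ (r', c) ∉ D ∧ (∀ r'', r' < r'' → r'' < r → (r'', c) ∈ D) ∧
    D' = insert (r', c) (D.erase (r, c))

/-- The largest part of a weak composition. -/
def maxPart (a : List ℕ) : ℕ := a.foldr max 0

/-- Number of cells of a diagram in row `i`. -/
def rowWeight (D : Finset (ℕ × ℕ)) (i : ℕ) : ℕ :=
  (D.filter (fun p => p.1 = i)).card

/-- The weight of a diagram, as a finitely supported function recording the
number of cells in each row. -/
noncomputable def wtF (D : Finset (ℕ × ℕ)) : ℕ →₀ ℕ := ∑ p ∈ D, Finsupp.single p.1 1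

/-- The exponent vector `x^a` of a weak composition `a` (1-based variables). -/
noncomputable def compFinsupp (a : List ℕ) : ℕ →₀ ℕ :=
  ∑ i ∈ Finset.range a.length, Finsupp.single (i + 1) (a.getD i 0)

/-- The boxes matched by a partial matching. -/
def matchedBoxes (M : Finset ((ℕ × ℕ) × (ℕ × ℕ))) : Finset (ℕ × ℕ) :=
  M.image Prod.fst ∪ M.image Prod.snd

/-- Initial vertical `i`-pairing: pair any boxes of rows `i` and `i+1` in the
same column. -/
def vInit (i : ℕ) (D : Finset (ℕ × ℕ)) : Finset ((ℕ × ℕ) × (ℕ × ℕ)) :=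
  (D.filter (fun p => p.1 = i + 1 ∧ (i, p.2) ∈ D)).image (fun p => (p, (i, p.2)))

/-- One step of the iterative vertical `i`-pairing: pair an unpaired box of row
`i+1` with the rightmost unpaired box of row `i` in a column to its left,
provided all boxes of rows `i`, `i+1` in the columns strictly between them are
already paired. -/
def VStep (i : ℕ) (D : Finset (ℕ × ℕ)) (M M' : Finset ((ℕ × ℕ) × (ℕ × ℕ))) : Prop :=
  ∃ cx cy, (i + 1, cx) ∈ D ∧ (i, cy) ∈ D ∧ cy < cx ∧
    (i + 1, cx) ∉ matchedBoxes M ∧ (i, cy) ∉ matchedBoxes M ∧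
    (∀ p ∈ D, (p.1 = i ∨ p.1 = i + 1) → cy < p.2 → p.2 < cx → p ∈ matchedBoxes M) ∧
    M' = insert ((i + 1, cx), (i, cy)) M

/-- The vertical `i`-pairing of `D`: a matching obtained from the same-column
pairing by iterating `VStep` until no further step applies. -/
def VOutcome (i : ℕ) (D : Finset (ℕ × ℕ)) (M : Finset ((ℕ × ℕ) × (ℕ × ℕ))) : Prop :=
  Relation.ReflTransGen (VStep i D) (vInit i D) M ∧ ∀ M', ¬ VStep i D M M'

/-- The raising operator `e_i` as a relation: `RaiseRel i D D'` holds when `D'`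
is obtained from `D` by pushing the rightmost vertically unpaired box of row
`i+1` down to row `i` (`e_i(D) = 0` corresponds to no `D'` existing). -/
def RaiseRel (i : ℕ) (D D' : Finset (ℕ × ℕ)) : Prop :=
  ∃ M c, VOutcome i D M ∧ (i + 1, c) ∈ D ∧ (i + 1, c) ∉ matchedBoxes M ∧
    (∀ c', (i + 1, c') ∈ D → (i + 1, c') ∉ matchedBoxes M → c' ≤ c) ∧
    D' = insert (i, c) (D.erase (i + 1, c))

section Aux

open Relation

lemma mem_matchedBoxes {M : Finset ((ℕ × ℕ) × (ℕ × ℕ))} {x : ℕ × ℕ} :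
    x ∈ matchedBoxes M ↔ ∃ q ∈ M, q.1 = x ∨ q.2 = x := by
  simp only [matchedBoxes, Finset.mem_union, Finset.mem_image]
  constructor
  · rintro (⟨q, hq, rfl⟩ | ⟨q, hq, rfl⟩)
    · exact ⟨q, hq, Or.inl rfl⟩
    · exact ⟨q, hq, Or.inr rfl⟩
  · rintro ⟨q, hq, rfl | rfl⟩
    · exact Or.inl ⟨q, hq, rfl⟩
    · exact Or.inr ⟨q, hq, rfl⟩

lemma matchedBoxes_mono {M N : Finset ((ℕ × ℕ) × (ℕ × ℕ))} (h : M ⊆ N) :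
    matchedBoxes M ⊆ matchedBoxes N := by
  intro x hx
  rw [mem_matchedBoxes] at hx ⊢
  obtain ⟨q, hq, hq'⟩ := hx
  exact ⟨q, h hq, hq'⟩

lemma fst_mem_matchedBoxes {M : Finset ((ℕ × ℕ) × (ℕ × ℕ))} {q : (ℕ × ℕ) × (ℕ × ℕ)}
    (h : q ∈ M) : q.1 ∈ matchedBoxes M :=
  mem_matchedBoxes.2 ⟨q, h, Or.inl rfl⟩

lemma snd_mem_matchedBoxes {M : Finset ((ℕ × ℕ) × (ℕ × ℕ))} {q : (ℕ × ℕ) × (ℕ × ℕ)}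
    (h : q ∈ M) : q.2 ∈ matchedBoxes M :=
  mem_matchedBoxes.2 ⟨q, h, Or.inr rfl⟩

lemma VStep.subset {i : ℕ} {D : Finset (ℕ × ℕ)} {M M' : Finset ((ℕ × ℕ) × (ℕ × ℕ))}
    (h : VStep i D M M') : M ⊆ M' := by
  obtain ⟨cx, cy, _, _, _, _, _, _, rfl⟩ := h
  exact Finset.subset_insert _ _

lemma rtg_subset {i : ℕ} {D : Finset (ℕ × ℕ)} {M M' : Finset ((ℕ × ℕ) × (ℕ × ℕ))}
    (h : ReflTransGen (VStep i D) M M') : M ⊆ M' := by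
  induction h with
  | refl => exact subset_rfl
  | tail _ h ih => exact ih.trans h.subset

lemma vInit_subset_prod {i : ℕ} {D : Finset (ℕ × ℕ)} : vInit i D ⊆ D ×ˢ D := by
  intro q hq
  simp only [vInit, Finset.mem_image, Finset.mem_filter] at hq
  obtain ⟨p, ⟨hp, _, hp2⟩, rfl⟩ := hq
  exact Finset.mem_product.2 ⟨hp, hp2⟩

lemma reach_subset_prod {i : ℕ} {D : Finset (ℕ × ℕ)} {M : Finset ((ℕ × ℕ) × (ℕ × ℕ))}
    (h : ReflTransGen (VStep i D) (vInit i D) M) : M ⊆ D ×ˢ D := by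
  induction h with
  | refl => exact vInit_subset_prod
  | tail _ h ih =>
    obtain ⟨cx, cy, h1, h2, _, _, _, _, rfl⟩ := h
    exact Finset.insert_subset (Finset.mem_product.2 ⟨h1, h2⟩) ih

lemma reach_boxes {i : ℕ} {D : Finset (ℕ × ℕ)} {M : Finset ((ℕ × ℕ) × (ℕ × ℕ))}
    (h : ReflTransGen (VStep i D) (vInit i D) M) : matchedBoxes M ⊆ D := by
  intro x hx
  rw [mem_matchedBoxes] at hx
  obtain ⟨q, hq, hq'⟩ := hx
  have := Finset.mem_product.1 (reach_subset_prod h hq)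
  rcases hq' with rfl | rfl
  · exact this.1
  · exact this.2

lemma VStep.card_lt {i : ℕ} {D : Finset (ℕ × ℕ)} {M M' : Finset ((ℕ × ℕ) × (ℕ × ℕ))}
    (h : VStep i D M M') : M.card < M'.card := by
  obtain ⟨cx, cy, _, _, _, h4, _, _, rfl⟩ := h
  have hnot : ((i + 1, cx), (i, cy)) ∉ M := fun hmem => h4 (fst_mem_matchedBoxes hmem)
  rw [Finset.card_insert_of_notMem hnot]
  omega

lemma exists_outcome (i : ℕ) (D : Finset (ℕ × ℕ)) : ∃ M, VOutcome i D M := by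
  suffices H : ∀ n (M : Finset ((ℕ × ℕ) × (ℕ × ℕ))), (D ×ˢ D).card - M.card ≤ n →
      ReflTransGen (VStep i D) (vInit i D) M → ∃ N, VOutcome i D N by
    exact H _ (vInit i D) le_rfl ReflTransGen.refl
  intro n
  induction n with
  | zero =>
    intro M hle hreach
    refine ⟨M, hreach, fun M' hM' => ?_⟩
    have h1 := hM'.card_lt
    have h2 : M'.card ≤ (D ×ˢ D).card :=
      Finset.card_le_card (reach_subset_prod (hreach.tail hM'))
    have h3 : M.card ≤ (D ×ˢ D).card := Finset.card_le_card (reach_subset_prod hreach)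
    omega
  | succ n ih =>
    intro M hle hreach
    by_cases h : ∃ M', VStep i D M M'
    · obtain ⟨M', hM'⟩ := h
      have h1 := hM'.card_lt
      have h2 : M'.card ≤ (D ×ˢ D).card :=
        Finset.card_le_card (reach_subset_prod (hreach.tail hM'))
      exact ih M' (by omega) (hreach.tail hM')
    · exact ⟨M, hreach, fun M' hM' => h ⟨M', hM'⟩⟩

lemma diamond_aux {i : ℕ} {D : Finset (ℕ × ℕ)} {M M1 M2 : Finset ((ℕ × ℕ) × (ℕ × ℕ))}
    {cx1 cy1 cx2 cy2 : ℕ}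
    (e1 : M1 = insert ((i + 1, cx1), (i, cy1)) M) (e2 : M2 = insert ((i + 1, cx2), (i, cy2)) M)
    (hx1 : (i + 1, cx1) ∈ D) (hy1 : (i, cy1) ∈ D) (hlt1 : cy1 < cx1)
    (hu1 : (i + 1, cx1) ∉ matchedBoxes M) (hv1 : (i, cy1) ∉ matchedBoxes M)
    (hb1 : ∀ p ∈ D, (p.1 = i ∨ p.1 = i + 1) → cy1 < p.2 → p.2 < cx1 → p ∈ matchedBoxes M)
    (hx2 : (i + 1, cx2) ∈ D) (hy2 : (i, cy2) ∈ D) (hlt2 : cy2 < cx2)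
    (hu2 : (i + 1, cx2) ∉ matchedBoxes M) (hv2 : (i, cy2) ∉ matchedBoxes M)
    (hb2 : ∀ p ∈ D, (p.1 = i ∨ p.1 = i + 1) → cy2 < p.2 → p.2 < cx2 → p ∈ matchedBoxes M)
    (hlt : cx1 < cx2) :
    ∃ M3, VStep i D M1 M3 ∧ VStep i D M2 M3 := by
  -- cx1 ≤ cy2
  have hcy2 : cx1 ≤ cy2 := by
    by_contra hc
    push_neg at hc
    exact hu1 (hb2 (i + 1, cx1) hx1 (Or.inr rfl) hc hlt)
  have hmono1 : matchedBoxes M ⊆ matchedBoxes M1 := by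
    rw [e1]; exact matchedBoxes_mono (Finset.subset_insert _ _)
  have hmono2 : matchedBoxes M ⊆ matchedBoxes M2 := by
    rw [e2]; exact matchedBoxes_mono (Finset.subset_insert _ _)
  have hmb1 : ∀ x : ℕ × ℕ, x ∈ matchedBoxes M1 ↔
      x = (i + 1, cx1) ∨ x = (i, cy1) ∨ x ∈ matchedBoxes M := by
    intro x
    rw [e1, mem_matchedBoxes]
    constructor
    · rintro ⟨q, hq, hq'⟩
      rcases Finset.mem_insert.1 hq with rfl | hq
      · rcases hq' with h | h
        · exact Or.inl h.symm
        · exact Or.inr (Or.inl h.symm)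
      · exact Or.inr (Or.inr (mem_matchedBoxes.2 ⟨q, hq, hq'⟩))
    · rintro (rfl | rfl | h)
      · exact ⟨_, Finset.mem_insert_self _ _, Or.inl rfl⟩
      · exact ⟨_, Finset.mem_insert_self _ _, Or.inr rfl⟩
      · obtain ⟨q, hq, hq'⟩ := mem_matchedBoxes.1 h
        exact ⟨q, Finset.mem_insert_of_mem hq, hq'⟩
  have hmb2 : ∀ x : ℕ × ℕ, x ∈ matchedBoxes M2 ↔
      x = (i + 1, cx2) ∨ x = (i, cy2) ∨ x ∈ matchedBoxes M := by
    intro x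
    rw [e2, mem_matchedBoxes]
    constructor
    · rintro ⟨q, hq, hq'⟩
      rcases Finset.mem_insert.1 hq with rfl | hq
      · rcases hq' with h | h
        · exact Or.inl h.symm
        · exact Or.inr (Or.inl h.symm)
      · exact Or.inr (Or.inr (mem_matchedBoxes.2 ⟨q, hq, hq'⟩))
    · rintro (rfl | rfl | h)
      · exact ⟨_, Finset.mem_insert_self _ _, Or.inl rfl⟩
      · exact ⟨_, Finset.mem_insert_self _ _, Or.inr rfl⟩
      · obtain ⟨q, hq, hq'⟩ := mem_matchedBoxes.1 h
        exact ⟨q, Finset.mem_insert_of_mem hq, hq'⟩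
  refine ⟨insert ((i + 1, cx2), (i, cy2)) M1, ?_, ?_⟩
  · refine ⟨cx2, cy2, hx2, hy2, hlt2, ?_, ?_, ?_, rfl⟩
    · rw [hmb1]
      push_neg
      refine ⟨?_, ?_, hu2⟩
      · intro h; injection h with _ h2; omega
      · intro h; injection h with h1; omega
    · rw [hmb1]
      push_neg
      refine ⟨?_, ?_, hv2⟩
      · intro h; injection h with h1; omega
      · intro h; injection h with _ h2; omega
    · intro p hp hr h1 h2
      exact hmono1 (hb2 p hp hr h1 h2)
  · refine ⟨cx1, cy1, hx1, hy1, hlt1, ?_, ?_, ?_, ?_⟩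
    · rw [hmb2]
      push_neg
      refine ⟨?_, ?_, hu1⟩
      · intro h; injection h with _ h2; omega
      · intro h; injection h with h1; omega
    · rw [hmb2]
      push_neg
      refine ⟨?_, ?_, hv1⟩
      · intro h; injection h with h1; omega
      · intro h; injection h with _ h2; omega
    · intro p hp hr h1 h2
      exact hmono2 (hb1 p hp hr h1 h2)
    · rw [e1, e2, Finset.insert_comm]

lemma diamond {i : ℕ} {D : Finset (ℕ × ℕ)} {M M1 M2 : Finset ((ℕ × ℕ) × (ℕ × ℕ))}
    (h1 : VStep i D M M1) (h2 : VStep i D M M2) :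
    M1 = M2 ∨ ∃ M3, VStep i D M1 M3 ∧ VStep i D M2 M3 := by
  obtain ⟨cx1, cy1, hx1, hy1, hlt1, hu1, hv1, hb1, e1⟩ := h1
  obtain ⟨cx2, cy2, hx2, hy2, hlt2, hu2, hv2, hb2, e2⟩ := h2
  rcases lt_trichotomy cx1 cx2 with hlt | heq | hlt
  · exact Or.inr (diamond_aux e1 e2 hx1 hy1 hlt1 hu1 hv1 hb1 hx2 hy2 hlt2 hu2 hv2 hb2 hlt)
  · subst heq
    have : cy1 = cy2 := by
      rcases lt_trichotomy cy1 cy2 with h | h | h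
      · exact absurd (hb1 (i, cy2) hy2 (Or.inl rfl) h hlt2) hv2
      · exact h
      · exact absurd (hb2 (i, cy1) hy1 (Or.inl rfl) h hlt1) hv1
    subst this
    exact Or.inl (e1.trans e2.symm)
  · obtain ⟨M3, hA, hB⟩ :=
      diamond_aux e2 e1 hx2 hy2 hlt2 hu2 hv2 hb2 hx1 hy1 hlt1 hu1 hv1 hb1 hlt
    exact Or.inr ⟨M3, hB, hA⟩

lemma unique_outcome {i : ℕ} {D : Finset (ℕ × ℕ)} {M1 M2 : Finset ((ℕ × ℕ) × (ℕ × ℕ))}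
    (h1 : VOutcome i D M1) (h2 : VOutcome i D M2) : M1 = M2 := by
  obtain ⟨r1, n1⟩ := h1
  obtain ⟨r2, n2⟩ := h2
  have cr : Join (ReflTransGen (VStep i D)) M1 M2 := by
    refine Relation.church_rosser ?_ r1 r2
    intro a b c hab hac
    rcases diamond hab hac with rfl | ⟨d, hbd, hcd⟩
    · exact ⟨b, ReflGen.refl, ReflTransGen.refl⟩
    · exact ⟨d, ReflGen.single hbd, ReflTransGen.single hcd⟩
  obtain ⟨N, hN1, hN2⟩ := cr
  have e1 : M1 = N := by
    rcases hN1.cases_head with h | ⟨c, hc, _⟩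
    · exact h
    · exact absurd hc (n1 c)
  have e2 : M2 = N := by
    rcases hN2.cases_head with h | ⟨c, hc, _⟩
    · exact h
    · exact absurd hc (n2 c)
  rw [e1, e2]

end Aux

section Aux2

open Relation

lemma vInit_subset_outcome {i : ℕ} {D : Finset (ℕ × ℕ)} {M : Finset ((ℕ × ℕ) × (ℕ × ℕ))}
    (h : ReflTransGen (VStep i D) (vInit i D) M) : vInit i D ⊆ M := rtg_subset h

lemma no_crossing {i : ℕ} {D : Finset (ℕ × ℕ)} {M : Finset ((ℕ × ℕ) × (ℕ × ℕ))}
    (hM : VOutcome i D M) {cy cx : ℕ} (h1 : (i, cy) ∈ D) (h2 : (i + 1, cx) ∈ D)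
    (h3 : (i, cy) ∉ matchedBoxes M) (h4 : (i + 1, cx) ∉ matchedBoxes M) : cx < cy := by
  obtain ⟨hreach, hmax⟩ := hM
  have hInit : vInit i D ⊆ M := rtg_subset hreach
  have key : ∀ n cy cx, cx - cy ≤ n → (i, cy) ∈ D → (i + 1, cx) ∈ D →
      (i, cy) ∉ matchedBoxes M → (i + 1, cx) ∉ matchedBoxes M → cx < cy := by
    intro n
    induction n with
    | zero =>
      intro cy cx hle h1 h2 h3 h4
      rcases Nat.lt_or_ge cx cy with h | h
      · exact h
      · exfalso
        have hcx : cx = cy := by omega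
        subst hcx
        have : ((i + 1, cx), (i, cx)) ∈ vInit i D := by
          simp only [vInit, Finset.mem_image, Finset.mem_filter]
          exact ⟨(i + 1, cx), ⟨h2, rfl, h1⟩, rfl⟩
        exact h4 (fst_mem_matchedBoxes (hInit this))
    | succ n ih =>
      intro cy cx hle h1 h2 h3 h4
      rcases Nat.lt_or_ge cx cy with h | h
      · exact h
      · exfalso
        have hne : cy ≠ cx := by
          rintro rfl
          have : ((i + 1, cy), (i, cy)) ∈ vInit i D := by
            simp only [vInit, Finset.mem_image, Finset.mem_filter]
            exact ⟨(i + 1, cy), ⟨h2, rfl, h1⟩, rfl⟩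
          exact h4 (fst_mem_matchedBoxes (hInit this))
        have hcylt : cy < cx := lt_of_le_of_ne (by omega) hne
        by_cases hb : ∀ p ∈ D, (p.1 = i ∨ p.1 = i + 1) → cy < p.2 → p.2 < cx →
            p ∈ matchedBoxes M
        · exact hmax _ ⟨cx, cy, h2, h1, hcylt, h4, h3, hb, rfl⟩
        · push_neg at hb
          obtain ⟨p, hpD, hpr, h5, h6, h7⟩ := hb
          obtain ⟨a, b⟩ := p
          simp only at hpr h5 h6 h7
          rcases hpr with rfl | rfl
          · have := ih b cx (by omega) hpD h2 h7 h4
            omega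
          · have := ih cy b (by omega) h1 hpD h3 h7
            omega
  exact key (cx - cy) cy cx le_rfl h1 h2 h3 h4

/-- From `RaiseRel i D E`, extract a characterization of `D` in terms of `E`:
the matching `M` is a `VOutcome` for `E`, and `c` is the leftmost unmatched
column of row `i` in `E`. -/
lemma raise_char {i : ℕ} {D E : Finset (ℕ × ℕ)} (h : RaiseRel i D E) :
    ∃ M c, VOutcome i E M ∧ (i, c) ∈ E ∧ (i, c) ∉ matchedBoxes M ∧
      (∀ b, (i, b) ∈ E → (i, b) ∉ matchedBoxes M → c ≤ b) ∧
      D = insert (i + 1, c) (E.erase (i, c)) := by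
  obtain ⟨M, c, ⟨hreach, hmax⟩, hcD, hcu, hrmost, hE⟩ := h
  have hboxes : matchedBoxes M ⊆ D := reach_boxes hreach
  have hInit : vInit i D ⊆ M := rtg_subset hreach
  -- (i, c) ∉ D
  have hicD : (i, c) ∉ D := by
    intro hic
    have : ((i + 1, c), (i, c)) ∈ vInit i D := by
      simp only [vInit, Finset.mem_image, Finset.mem_filter]
      exact ⟨(i + 1, c), ⟨hcD, rfl, hic⟩, rfl⟩
    exact hcu (fst_mem_matchedBoxes (hInit this))
  -- membership translation for E
  have hmemE : ∀ p : ℕ × ℕ, p ∈ E ↔ p = (i, c) ∨ (p ∈ D ∧ p ≠ (i + 1, c)) := by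
    intro p
    rw [hE]
    simp only [Finset.mem_insert, Finset.mem_erase]
    tauto
  -- vInit is the same for D and E
  have hvInit : vInit i E = vInit i D := by
    ext q
    simp only [vInit, Finset.mem_image, Finset.mem_filter]
    constructor
    · rintro ⟨p, ⟨hpE, hpr, hp2⟩, rfl⟩
      have hpD : p ∈ D ∧ p ≠ (i + 1, c) := by
        rcases (hmemE p).1 hpE with h | h
        · exfalso; rw [h] at hpr; simp at hpr
        · exact h
      have hp2D : (i, p.2) ∈ D := by
        rcases (hmemE (i, p.2)).1 hp2 with h | h
        · exfalso
          have : p.2 = c := by injection h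
          apply hpD.2
          rw [← hpr, ← this]
        · exact h.1
      exact ⟨p, ⟨hpD.1, hpr, hp2D⟩, rfl⟩
    · rintro ⟨p, ⟨hpD, hpr, hp2⟩, rfl⟩
      have hpnec : p ≠ (i + 1, c) := by
        rintro rfl
        exact hicD hp2
      refine ⟨p, ⟨(hmemE p).2 (Or.inr ⟨hpD, hpnec⟩), hpr, ?_⟩, rfl⟩
      refine (hmemE (i, p.2)).2 (Or.inr ⟨hp2, ?_⟩)
      intro heq
      injection heq with h1
      omega
  -- (i, c) and anything outside D are unmatched
  have hicu : (i, c) ∉ matchedBoxes M := fun hmem => hicD (hboxes hmem)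
  -- chain transfer: D-steps below M are E-steps
  have hstep : ∀ A B : Finset ((ℕ × ℕ) × (ℕ × ℕ)), VStep i D A B → B ⊆ M → VStep i E A B := by
    intro A B hAB hBM
    obtain ⟨cx, cy, hx, hy, hlt, hu, hv, hb, rfl⟩ := hAB
    have hqM : ((i + 1, cx), (i, cy)) ∈ M := hBM (Finset.mem_insert_self _ _)
    have hxM : (i + 1, cx) ∈ matchedBoxes M := fst_mem_matchedBoxes hqM
    have hcxc : cx ≠ c := by rintro rfl; exact hcu hxM
    have hAM : matchedBoxes A ⊆ matchedBoxes M :=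
      matchedBoxes_mono ((Finset.subset_insert _ _).trans hBM)
    refine ⟨cx, cy, ?_, ?_, hlt, hu, hv, ?_, rfl⟩
    · exact (hmemE _).2 (Or.inr ⟨hx, by simp [hcxc]⟩)
    · refine (hmemE _).2 (Or.inr ⟨hy, by simp⟩)
    · intro p hpE hpr h1 h2
      rcases (hmemE p).1 hpE with rfl | ⟨hpD, _⟩
      · exfalso
        simp only at h1 h2
        exact hcu (hAM (hb (i + 1, c) hcD (Or.inr rfl) h1 h2))
      · exact hb p hpD hpr h1 h2
  have hchain : ∀ A B : Finset ((ℕ × ℕ) × (ℕ × ℕ)), ReflTransGen (VStep i D) A B → B ⊆ M →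
      ReflTransGen (VStep i E) A B := by
    intro A B hAB
    induction hAB with
    | refl => intro _; exact ReflTransGen.refl
    | tail hab hbc ih =>
      intro hBM
      exact (ih ((hbc.subset).trans hBM)).tail (hstep _ _ hbc hBM)
  have hreachE : ReflTransGen (VStep i E) (vInit i E) M := by
    rw [hvInit]
    exact hchain _ _ hreach subset_rfl
  -- maximality for E
  have hmaxE : ∀ M', ¬ VStep i E M M' := by
    rintro M' ⟨cx, cy, hx, hy, hlt, hu, hv, hb, rfl⟩
    have hxD : (i + 1, cx) ∈ D := by
      rcases (hmemE _).1 hx with h | h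
      · exfalso; injection h with h1; omega
      · exact h.1
    have hcxc : cx ≠ c := by
      rintro rfl
      exact ((hmemE _).1 hx).elim (by rintro h; injection h with h1; omega)
        (fun h => h.2 rfl)
    rcases (hmemE _).1 hy with hyc | ⟨hyD, _⟩
    · -- cy = c : contradiction with rightmost property
      have hcyc : cy = c := by injection hyc with _ h2
      subst hcyc
      have := hrmost cx hxD hu
      omega
    · -- cy ≠ c : the same step would apply to D
      refine hmax (insert ((i + 1, cx), (i, cy)) M) ⟨cx, cy, hxD, hyD, hlt, hu, hv, ?_, rfl⟩
      intro p hpD hpr h1 h2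
      by_cases hpc : p = (i + 1, c)
      · exfalso
        subst hpc
        simp only at h1 h2
        exact hicu (hb (i, c) ((hmemE _).2 (Or.inl rfl)) (Or.inl rfl) h1 h2)
      · have hpnic : p ≠ (i, c) := by rintro rfl; exact hicD hpD
        exact hb p ((hmemE p).2 (Or.inr ⟨hpD, hpc⟩)) hpr h1 h2
  refine ⟨M, c, ⟨hreachE, hmaxE⟩, (hmemE _).2 (Or.inl rfl), hicu, ?_, ?_⟩
  · -- leftmost unmatched in row i of E
    intro b hbE hbu
    by_cases hbc : b = c
    · omega
    · have hbD : (i, b) ∈ D := by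
        rcases (hmemE _).1 hbE with h | h
        · exfalso; apply hbc; injection h with _ h2
        · exact h.1
      have := no_crossing ⟨hreach, hmax⟩ hbD hcD hbu hcu
      omega
  · -- D = insert (i+1,c) (E.erase (i,c))
    ext p
    simp only [Finset.mem_insert, Finset.mem_erase, hmemE p]
    constructor
    · intro hpD
      by_cases hpc : p = (i + 1, c)
      · exact Or.inl hpc
      · refine Or.inr ⟨?_, Or.inr ⟨hpD, hpc⟩⟩
        rintro rfl; exact hicD hpD
    · rintro (rfl | ⟨hne, rfl | ⟨hpD, _⟩⟩)
      · exact hcD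
      · exact absurd rfl hne
      · exact hpD

end Aux2

/-- main -/
theorem vertical_pairing_wellDefined_and_raise_injective (i : ℕ) (hi : 1 ≤ i) :
    (∀ D : Finset (ℕ × ℕ), ∃! M, VOutcome i D M) ∧
      (∀ D D' E : Finset (ℕ × ℕ), RaiseRel i D E → RaiseRel i D' E → D = D') := by
  constructor
  · intro D
    obtain ⟨M, hM⟩ := exists_outcome i D
    exact ⟨M, hM, fun N hN => unique_outcome hN hM⟩
  · intro D D' E h h'
    obtain ⟨M, c, hO, hcE, hcu, hmin, hD⟩ := raise_char h
    obtain ⟨M', c', hO', hcE', hcu', hmin', hD'⟩ := raise_char h'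
    have hMM : M = M' := unique_outcome hO hO'
    subst hMM
    have hcc : c = c' := le_antisymm (hmin c' hcE' hcu') (hmin' c hcE hcu)
    rw [hD, hD', hcc]
end

section
/- The rectification operators commute with the raising operators on diagrams: if D is a diagram with 𝚎̄_c(D) ≠ 0 and e_r(D) ≠ 0, then 𝚎̄_c(e_r(D)) = e_r(𝚎̄_c(D)); moreover e_r(D) ≠ 0 if and only if e_r(𝚎̄_c(D)) ≠ 0 whenever 𝚎̄_c(D) ≠ 0, and symmetrically 𝚎̄_c(D) ≠ 0 iff 𝚎̄_c(e_r(D)) ≠ 0 whenever e_r(D) ≠ 0. -/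
open scoped Classical

/-- Initial horizontal `c`-pairing: pair any boxes of columns `c` and `c+1` in
the same row. Cells are `(row, column)`. -/
def hInit (c : ℕ) (D : Finset (ℕ × ℕ)) : Finset ((ℕ × ℕ) × (ℕ × ℕ)) :=
  (D.filter (fun p => p.2 = c + 1 ∧ (p.1, c) ∈ D)).image (fun p => (p, (p.1, c)))

/-- One step of the iterative horizontal `c`-pairing: pair an unpaired box of
column `c+1` with the lowest unpaired box of column `c` in a row above it,
provided all boxes of columns `c`, `c+1` in the rows strictly between them are
already paired. -/
def HStep (c : ℕ) (D : Finset (ℕ × ℕ)) (M M' : Finset ((ℕ × ℕ) × (ℕ × ℕ))) : Prop :=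
  ∃ rx ry, (rx, c + 1) ∈ D ∧ (ry, c) ∈ D ∧ rx < ry ∧
    (rx, c + 1) ∉ matchedBoxes M ∧ (ry, c) ∉ matchedBoxes M ∧
    (∀ p ∈ D, (p.2 = c ∨ p.2 = c + 1) → rx < p.1 → p.1 < ry → p ∈ matchedBoxes M) ∧
    M' = insert ((rx, c + 1), (ry, c)) M

/-- The horizontal `c`-pairing of `D`. -/
def HOutcome (c : ℕ) (D : Finset (ℕ × ℕ)) (M : Finset ((ℕ × ℕ) × (ℕ × ℕ))) : Prop :=
  Relation.ReflTransGen (HStep c D) (hInit c D) M ∧ ∀ M', ¬ HStep c D M M'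

/-- The rectification operator `𝚎̄_c` as a relation: `RectRel c D D'` holds when
`D'` is obtained from `D` by pushing the bottom-most horizontally unpaired box
of column `c+1` left to column `c` (`𝚎̄_c(D) = 0` corresponds to no `D'`). -/
def RectRel (c : ℕ) (D D' : Finset (ℕ × ℕ)) : Prop :=
  ∃ M r, HOutcome c D M ∧ (r, c + 1) ∈ D ∧ (r, c + 1) ∉ matchedBoxes M ∧
    (∀ r', (r', c + 1) ∈ D → (r', c + 1) ∉ matchedBoxes M → r ≤ r') ∧
    D' = insert (r, c) (D.erase (r, c + 1))

namespace KC
open Finset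

lemma mem_matchedBoxes {M : Finset ((ℕ×ℕ)×(ℕ×ℕ))} {b : ℕ×ℕ} :
    b ∈ matchedBoxes M ↔ ∃ p ∈ M, p.1 = b ∨ p.2 = b := by
  unfold matchedBoxes
  simp only [Finset.mem_union, Finset.mem_image]
  constructor
  · rintro (⟨p, hp, rfl⟩ | ⟨p, hp, rfl⟩)
    · exact ⟨p, hp, Or.inl rfl⟩
    · exact ⟨p, hp, Or.inr rfl⟩
  · rintro ⟨p, hp, (rfl | rfl)⟩
    · exact Or.inl ⟨p, hp, rfl⟩
    · exact Or.inr ⟨p, hp, rfl⟩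

lemma matchedBoxes_mono {M M' : Finset ((ℕ×ℕ)×(ℕ×ℕ))} (h : M ⊆ M') :
    matchedBoxes M ⊆ matchedBoxes M' := by
  intro b hb
  rw [mem_matchedBoxes] at hb ⊢
  obtain ⟨p, hp, hb⟩ := hb
  exact ⟨p, h hp, hb⟩

/-- Static properties of a vertical matching. -/
def VGood (i : ℕ) (D : Finset (ℕ×ℕ)) (M : Finset ((ℕ×ℕ)×(ℕ×ℕ))) : Prop :=
  (∀ p ∈ M, ∃ cx cy, p = ((i+1,cx),(i,cy)) ∧ (i+1,cx) ∈ D ∧ (i,cy) ∈ D ∧ cy ≤ cx ∧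
      (∀ q ∈ D, (q.1 = i ∨ q.1 = i + 1) → cy < q.2 → q.2 < cx → q ∈ matchedBoxes M)) ∧
  (∀ p ∈ M, ∀ q ∈ M, (p.1 = q.1 ∨ p.2 = q.2) → p = q) ∧
  (∀ p ∈ M, ∀ q ∈ M, ∀ cx cy dx dy, p = ((i+1,cx),(i,cy)) → q = ((i+1,dx),(i,dy)) →
      cy < dy → dy ≤ cx → cx < dx → False) ∧
  vInit i D ⊆ M

lemma vInit_mem {i : ℕ} {D : Finset (ℕ×ℕ)} {b : ℕ} (h1 : (i+1,b) ∈ D) (h2 : (i,b) ∈ D) :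
    ((i+1,b),(i,b)) ∈ vInit i D := by
  unfold vInit
  rw [Finset.mem_image]
  exact ⟨(i+1,b), by simp [Finset.mem_filter, h1, h2], rfl⟩

lemma mem_vInit {i : ℕ} {D : Finset (ℕ×ℕ)} {p : (ℕ×ℕ)×(ℕ×ℕ)} (h : p ∈ vInit i D) :
    ∃ b, p = ((i+1,b),(i,b)) ∧ (i+1,b) ∈ D ∧ (i,b) ∈ D := by
  unfold vInit at h
  rw [Finset.mem_image] at h
  obtain ⟨q, hq, rfl⟩ := h
  rw [Finset.mem_filter] at hq
  obtain ⟨hqD, hq1, hq2⟩ := hq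
  refine ⟨q.2, ?_, ?_, hq2⟩
  · ext <;> simp [hq1]
  · rw [← hq1]; exact hqD

lemma vGood_vInit (i : ℕ) (D : Finset (ℕ×ℕ)) : VGood i D (vInit i D) := by
  refine ⟨?_, ?_, ?_, subset_rfl⟩
  · intro p hp
    obtain ⟨b, rfl, h1, h2⟩ := mem_vInit hp
    exact ⟨b, b, rfl, h1, h2, le_rfl, fun q _ _ hlt1 hlt2 => absurd (hlt1.trans hlt2) (lt_irrefl _)⟩
  · intro p hp q hq hpq
    obtain ⟨b, rfl, _, _⟩ := mem_vInit hp
    obtain ⟨b', rfl, _, _⟩ := mem_vInit hq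
    rcases hpq with h | h <;> · simp only [Prod.mk.injEq] at h; simp [h]
  · intro p hp q hq cx cy dx dy hp' hq' h1 h2 h3
    obtain ⟨b, rfl, _, _⟩ := mem_vInit hp
    obtain ⟨b', rfl, _, _⟩ := mem_vInit hq
    simp only [Prod.mk.injEq] at hp' hq'
    omega

lemma vGood_step {i : ℕ} {D : Finset (ℕ×ℕ)} {M M' : Finset ((ℕ×ℕ)×(ℕ×ℕ))}
    (hg : VGood i D M) (hs : VStep i D M M') : VGood i D M' := by
  obtain ⟨shape, simple, ncross, init⟩ := hg
  obtain ⟨cx, cy, hcx, hcy, hlt, hucx, hucy, hbet, rfl⟩ := hs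
  have hnotmem : ∀ p ∈ M, p ≠ ((i+1,cx),(i,cy)) := by
    intro p hp he
    exact hucx (mem_matchedBoxes.2 ⟨p, hp, Or.inl (by rw [he])⟩)
  have hsub : M ⊆ insert ((i+1,cx),(i,cy)) M := Finset.subset_insert _ _
  refine ⟨?_, ?_, ?_, init.trans hsub⟩
  · intro p hp
    rcases Finset.mem_insert.1 hp with rfl | hp
    · exact ⟨cx, cy, rfl, hcx, hcy, le_of_lt hlt,
        fun q hq hrow h1 h2 => matchedBoxes_mono hsub (hbet q hq hrow h1 h2)⟩
    · obtain ⟨a, b, heq, h1, h2, h3, h4⟩ := shape p hp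
      exact ⟨a, b, heq, h1, h2, h3,
        fun q hq hrow hl1 hl2 => matchedBoxes_mono hsub (h4 q hq hrow hl1 hl2)⟩
  · intro p hp q hq hpq
    rcases Finset.mem_insert.1 hp with rfl | hp <;> rcases Finset.mem_insert.1 hq with rfl | hq
    · rfl
    · -- q old shares component with new pair
      exfalso
      obtain ⟨a, b, heq, _, _, _, _⟩ := shape q hq
      rcases hpq with h | h
      · exact hucx (mem_matchedBoxes.2 ⟨q, hq, Or.inl h.symm⟩)
      · exact hucy (mem_matchedBoxes.2 ⟨q, hq, Or.inr h.symm⟩)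
    · exfalso
      rcases hpq with h | h
      · exact hucx (mem_matchedBoxes.2 ⟨p, hp, Or.inl h⟩)
      · exact hucy (mem_matchedBoxes.2 ⟨p, hp, Or.inr h⟩)
    · exact simple p hp q hq hpq
  · intro p hp q hq a b a' b' hp' hq' h1 h2 h3
    rcases Finset.mem_insert.1 hp with rfl | hp <;> rcases Finset.mem_insert.1 hq with rfl | hq
    · simp only [Prod.mk.injEq] at hp' hq'; omega
    · -- p is new pair: (a,b)=(cx,cy); q old : b < b' ≤ a < a'
      simp only [Prod.mk.injEq] at hp'
      obtain ⟨a2, b2, heq, hq1, hq2, hle, hbet'⟩ := shape q hq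
      rw [hq'] at heq
      simp only [Prod.mk.injEq] at heq
      have ha2 : a2 = a' := by omega
      have hb2 : b2 = b' := by omega
      rcases lt_or_eq_of_le h2 with hlt' | heq'
      · -- b' < a = cx : (i+1,cx) strictly between q's pair
        have := hbet' (i+1, cx) hcx (Or.inr rfl) (by simp; omega) (by simp; omega)
        exact hucx this
      · -- b' = a = cx : vInit pair at column cx
        have hb2cx : b2 = cx := by omega
        rw [hb2cx] at hq2
        have : ((i+1,cx),(i,cx)) ∈ M := init (vInit_mem hcx hq2)
        exact hucx (mem_matchedBoxes.2 ⟨_, this, Or.inl rfl⟩)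
    · -- q is new pair: (a',b')=(cx,cy); p old : b < cy ≤ a < cx
      simp only [Prod.mk.injEq] at hq'
      obtain ⟨a2, b2, heq, hp1, hp2, hle, hbet'⟩ := shape p hp
      rw [hp'] at heq
      simp only [Prod.mk.injEq] at heq
      have ha2 : a2 = a := by omega
      have hb2 : b2 = b := by omega
      rcases lt_or_eq_of_le h2 with hlt' | heq'
      · -- b' = cy < a : (i,cy) strictly between p's pair
        have := hbet' (i, cy) hcy (Or.inl rfl) (by simp; omega) (by simp; omega)
        exact hucy this
      · -- cy = a : vInit pair at column a
        have ha2cy : a2 = cy := by omega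
        rw [ha2cy] at hp1
        have : ((i+1,cy),(i,cy)) ∈ M := init (vInit_mem hp1 hcy)
        exact hucy (mem_matchedBoxes.2 ⟨_, this, Or.inr rfl⟩)
    · exact ncross p hp q hq a b a' b' hp' hq' h1 h2 h3

end KC

namespace KC
open Finset

lemma vGood_of_reach {i : ℕ} {D : Finset (ℕ×ℕ)} {M : Finset ((ℕ×ℕ)×(ℕ×ℕ))}
    (h : Relation.ReflTransGen (VStep i D) (vInit i D) M) : VGood i D M := by
  induction h with
  | refl => exact vGood_vInit i D
  | tail _ hstep ih => exact vGood_step ih hstep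

lemma matched_top {i : ℕ} {D : Finset (ℕ×ℕ)} {M : Finset ((ℕ×ℕ)×(ℕ×ℕ))} {x : ℕ}
    (hg : VGood i D M) (hx : (i+1,x) ∈ matchedBoxes M) : ∃ y, ((i+1,x),(i,y)) ∈ M := by
  obtain ⟨p, hp, hc⟩ := mem_matchedBoxes.1 hx
  obtain ⟨cx, cy, rfl, _, _, _, _⟩ := hg.1 p hp
  rcases hc with h | h <;> simp only [Prod.mk.injEq] at h
  · obtain ⟨_, h2⟩ := h; rw [← h2]; exact ⟨cy, hp⟩
  · omega

lemma matched_bot {i : ℕ} {D : Finset (ℕ×ℕ)} {M : Finset ((ℕ×ℕ)×(ℕ×ℕ))} {y : ℕ}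
    (hg : VGood i D M) (hy : (i,y) ∈ matchedBoxes M) : ∃ x, ((i+1,x),(i,y)) ∈ M := by
  obtain ⟨p, hp, hc⟩ := mem_matchedBoxes.1 hy
  obtain ⟨cx, cy, rfl, _, _, _, _⟩ := hg.1 p hp
  rcases hc with h | h <;> simp only [Prod.mk.injEq] at h
  · omega
  · obtain ⟨_, h2⟩ := h; rw [← h2]; exact ⟨cx, hp⟩

/-- Number of cells of `D` in row `i` with column in `[k,x]`. -/
noncomputable def rowCnt (D : Finset (ℕ×ℕ)) (i k x : ℕ) : ℕ :=
  ((Finset.Icc k x).filter (fun y => (i,y) ∈ D)).card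

/-- Number of cells of `D` in column `j` with row in `[k,x]`. -/
noncomputable def colCnt (D : Finset (ℕ×ℕ)) (j k x : ℕ) : ℕ :=
  ((Finset.Icc k x).filter (fun s => (s,j) ∈ D)).card

/-- Counting criterion for the box `(i+1,x)` to be vertically unpaired. -/
def UV (i : ℕ) (D : Finset (ℕ×ℕ)) (x : ℕ) : Prop :=
  (i+1,x) ∈ D ∧ ∀ k, k ≤ x → rowCnt D i k x < rowCnt D (i+1) k x

/-- Counting criterion for the box `(ρ,c+1)` to be horizontally unpaired. -/
def UH (c : ℕ) (D : Finset (ℕ×ℕ)) (ρ : ℕ) : Prop :=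
  (ρ,c+1) ∈ D ∧ ∀ k, ρ ≤ k → colCnt D c ρ k < colCnt D (c+1) ρ k

lemma cnt_split {P : ℕ → Prop} [DecidablePred P] {k m x : ℕ} (h1 : k ≤ m + 1) (h2 : m ≤ x) :
    ((Finset.Icc k x).filter (fun y => P y)).card
      = ((Finset.Icc k m).filter (fun y => P y)).card
        + ((Finset.Icc (m+1) x).filter (fun y => P y)).card := by
  have hu : Finset.Icc k m ∪ Finset.Icc (m+1) x = Finset.Icc k x := by
    ext z; simp only [Finset.mem_union, Finset.mem_Icc]; omega
  have hd : Disjoint ((Finset.Icc k m).filter (fun y => P y))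
      ((Finset.Icc (m+1) x).filter (fun y => P y)) := by
    rw [Finset.disjoint_left]
    intro z hz1 hz2
    simp only [Finset.mem_filter, Finset.mem_Icc] at hz1 hz2
    omega
  rw [← hu, Finset.filter_union, Finset.card_union_of_disjoint hd]

lemma cnt_single {P : ℕ → Prop} [DecidablePred P] (k : ℕ) :
    ((Finset.Icc k k).filter (fun y => P y)).card = if P k then 1 else 0 := by
  rw [Finset.Icc_self]
  by_cases h : P k <;> simp [Finset.filter_singleton, h]

lemma cnt_empty {P : ℕ → Prop} [DecidablePred P] {k x : ℕ} (h : x < k) :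
    ((Finset.Icc k x).filter (fun y => P y)).card = 0 := by
  rw [Finset.Icc_eq_empty (by omega)]; simp

lemma cnt_congr {P Q : ℕ → Prop} [DecidablePred P] [DecidablePred Q] (h : ∀ z, P z ↔ Q z) (k x : ℕ) :
    ((Finset.Icc k x).filter (fun y => P y)).card
      = ((Finset.Icc k x).filter (fun y => Q y)).card := by
  congr 1
  apply Finset.filter_congr
  intro z _
  simp [h z]

/-- Replacing the element `b` by `a` in a set of naturals: effect on interval counts. -/
lemma cnt_swap {P P' : ℕ → Prop} [DecidablePred P] [DecidablePred P'] {a b : ℕ} (h : ∀ z, P' z ↔ (z = a ∨ (P z ∧ z ≠ b)))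
    (hPb : P b) (hPa : ¬ P a) (k x : ℕ) :
    ((Finset.Icc k x).filter (fun y => P' y)).card
        + (if k ≤ b ∧ b ≤ x then 1 else 0)
      = ((Finset.Icc k x).filter (fun y => P y)).card
        + (if k ≤ a ∧ a ≤ x then 1 else 0) := by
  have hab : a ≠ b := fun he => hPa (he ▸ hPb)
  by_cases ha : k ≤ a ∧ a ≤ x <;> by_cases hb : k ≤ b ∧ b ≤ x
  · have hfe : (Finset.Icc k x).filter (fun y => P' y)
        = insert a (((Finset.Icc k x).filter (fun y => P y)).erase b) := by
      ext z
      simp only [Finset.mem_filter, Finset.mem_Icc, Finset.mem_insert, Finset.mem_erase, h z]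
      constructor
      · rintro ⟨hz, (rfl | ⟨hP, hne⟩)⟩
        · exact Or.inl rfl
        · exact Or.inr ⟨hne, hz, hP⟩
      · rintro (rfl | ⟨hne, hz, hP⟩)
        · exact ⟨ha, Or.inl rfl⟩
        · exact ⟨hz, Or.inr ⟨hP, hne⟩⟩
    rw [hfe, Finset.card_insert_of_notMem (by simp [hPa]),
      Finset.card_erase_of_mem (by simp [Finset.mem_filter, Finset.mem_Icc, hb, hPb])]
    have hpos : 0 < ((Finset.Icc k x).filter (fun y => P y)).card :=
      Finset.card_pos.2 ⟨b, by simp [Finset.mem_filter, Finset.mem_Icc, hb, hPb]⟩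
    simp only [if_pos ha, if_pos hb]
    omega
  · have hfe : (Finset.Icc k x).filter (fun y => P' y)
        = insert a ((Finset.Icc k x).filter (fun y => P y)) := by
      ext z
      simp only [Finset.mem_filter, Finset.mem_Icc, Finset.mem_insert, h z]
      constructor
      · rintro ⟨hz, (rfl | ⟨hP, hne⟩)⟩
        · exact Or.inl rfl
        · exact Or.inr ⟨hz, hP⟩
      · rintro (rfl | ⟨hz, hP⟩)
        · exact ⟨ha, Or.inl rfl⟩
        · refine ⟨hz, Or.inr ⟨hP, ?_⟩⟩
          rintro rfl; exact hb hz
    rw [hfe, Finset.card_insert_of_notMem (by simp [hPa])]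
    simp only [if_pos ha, if_neg hb]
  · have hfe : (Finset.Icc k x).filter (fun y => P' y)
        = ((Finset.Icc k x).filter (fun y => P y)).erase b := by
      ext z
      simp only [Finset.mem_filter, Finset.mem_Icc, Finset.mem_erase, h z]
      constructor
      · rintro ⟨hz, (rfl | ⟨hP, hne⟩)⟩
        · exact absurd hz ha
        · exact ⟨hne, hz, hP⟩
      · rintro ⟨hne, hz, hP⟩
        exact ⟨hz, Or.inr ⟨hP, hne⟩⟩
    rw [hfe, Finset.card_erase_of_mem (by simp [Finset.mem_filter, Finset.mem_Icc, hb, hPb])]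
    have hpos : 0 < ((Finset.Icc k x).filter (fun y => P y)).card :=
      Finset.card_pos.2 ⟨b, by simp [Finset.mem_filter, Finset.mem_Icc, hb, hPb]⟩
    simp only [if_neg ha, if_pos hb]
    omega
  · have hfe : (Finset.Icc k x).filter (fun y => P' y)
        = (Finset.Icc k x).filter (fun y => P y) := by
      ext z
      simp only [Finset.mem_filter, Finset.mem_Icc, h z]
      constructor
      · rintro ⟨hz, (rfl | ⟨hP, hne⟩)⟩
        · exact absurd hz ha
        · exact ⟨hz, hP⟩
      · rintro ⟨hz, hP⟩
        refine ⟨hz, Or.inr ⟨hP, ?_⟩⟩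
        rintro rfl; exact hb hz
    rw [hfe, if_neg ha, if_neg hb]
end KC

namespace KC
open Finset

lemma vpair_facts {i : ℕ} {D : Finset (ℕ×ℕ)} {M : Finset ((ℕ×ℕ)×(ℕ×ℕ))}
    (hg : VGood i D M) {a b : ℕ} (hp : ((i+1,a),(i,b)) ∈ M) :
    (i+1,a) ∈ D ∧ (i,b) ∈ D ∧ b ≤ a ∧
      ∀ q ∈ D, (q.1 = i ∨ q.1 = i + 1) → b < q.2 → q.2 < a → q ∈ matchedBoxes M := by
  obtain ⟨cx, cy, heq, h1, h2, h3, h4⟩ := hg.1 _ hp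
  simp only [Prod.mk.injEq] at heq
  obtain ⟨⟨_, hcx⟩, _, hcy⟩ := heq
  subst hcx; subst hcy
  exact ⟨h1, h2, h3, h4⟩

lemma vsimple_fst {i : ℕ} {D : Finset (ℕ×ℕ)} {M : Finset ((ℕ×ℕ)×(ℕ×ℕ))}
    (hg : VGood i D M) {a b b' : ℕ} (hp : ((i+1,a),(i,b)) ∈ M)
    (hq : ((i+1,a),(i,b')) ∈ M) : b = b' := by
  have := hg.2.1 _ hp _ hq (Or.inl rfl)
  simp only [Prod.mk.injEq] at this
  omega

lemma vsimple_snd {i : ℕ} {D : Finset (ℕ×ℕ)} {M : Finset ((ℕ×ℕ)×(ℕ×ℕ))}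
    (hg : VGood i D M) {a a' b : ℕ} (hp : ((i+1,a),(i,b)) ∈ M)
    (hq : ((i+1,a'),(i,b)) ∈ M) : a = a' := by
  have := hg.2.1 _ hp _ hq (Or.inr rfl)
  simp only [Prod.mk.injEq] at this
  omega

lemma vncross {i : ℕ} {D : Finset (ℕ×ℕ)} {M : Finset ((ℕ×ℕ)×(ℕ×ℕ))}
    (hg : VGood i D M) {a b a' b' : ℕ} (hp : ((i+1,a),(i,b)) ∈ M)
    (hq : ((i+1,a'),(i,b')) ∈ M) (h1 : b < b') (h2 : b' ≤ a) (h3 : a < a') : False :=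
  hg.2.2.1 _ hp _ hq a b a' b' rfl rfl h1 h2 h3

/-- The opener matched to a given closer (junk value if unmatched). -/
noncomputable def vpartner (M : Finset ((ℕ×ℕ)×(ℕ×ℕ))) (i z : ℕ) : ℕ :=
  if hz : ∃ w, ((i+1,w),(i,z)) ∈ M then hz.choose else 0

lemma vpartner_spec {M : Finset ((ℕ×ℕ)×(ℕ×ℕ))} {i z : ℕ}
    (hz : ∃ w, ((i+1,w),(i,z)) ∈ M) : ((i+1, vpartner M i z),(i,z)) ∈ M := by
  unfold vpartner
  rw [dif_pos hz]
  exact hz.choose_spec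

/-- The closer matched to a given opener (junk value if unmatched). -/
noncomputable def vpartner' (M : Finset ((ℕ×ℕ)×(ℕ×ℕ))) (i z : ℕ) : ℕ :=
  if hz : ∃ w, ((i+1,z),(i,w)) ∈ M then hz.choose else 0

lemma vpartner'_spec {M : Finset ((ℕ×ℕ)×(ℕ×ℕ))} {i z : ℕ}
    (hz : ∃ w, ((i+1,z),(i,w)) ∈ M) : ((i+1,z),(i, vpartner' M i z)) ∈ M := by
  unfold vpartner'
  rw [dif_pos hz]
  exact hz.choose_spec

/-- If `UV` holds then the box is unmatched in any good matching. -/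
lemma vUV_unmatched {i : ℕ} {D : Finset (ℕ×ℕ)} {M : Finset ((ℕ×ℕ)×(ℕ×ℕ))}
    (hg : VGood i D M) {x : ℕ} (h : UV i D x) : (i+1,x) ∉ matchedBoxes M := by
  intro hmat
  obtain ⟨y, hP⟩ := matched_top hg hmat
  obtain ⟨hxD, hyD, hyx, hbet⟩ := vpair_facts hg hP
  rcases eq_or_lt_of_le hyx with rfl | hlt
  · -- y = x : (i,x) ∈ D contradicts UV at k = x
    have hk := h.2 y le_rfl
    unfold rowCnt at hk
    rw [cnt_single, cnt_single, if_pos hyD] at hk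
    split at hk <;> omega
  · -- strict: injection argument
    have key : ∀ z ∈ (Finset.Icc (y+1) x).filter (fun z => (i+1,z) ∈ D),
        (∃ w, ((i+1,z),(i,w)) ∈ M) := by
      intro z hz
      simp only [Finset.mem_filter, Finset.mem_Icc] at hz
      obtain ⟨⟨hz1, hz2⟩, hzD⟩ := hz
      rcases eq_or_lt_of_le hz2 with rfl | hzx
      · exact ⟨y, hP⟩
      · have := hbet (i+1, z) hzD (Or.inr rfl) (by simpa using hz1) (by simpa using hzx)
        exact matched_top hg this
    have hcard : ((Finset.Icc (y+1) x).filter (fun z => (i+1,z) ∈ D)).card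
        ≤ ((Finset.Icc y x).filter (fun z => (i,z) ∈ D)).card := by
      apply Finset.card_le_card_of_injOn (vpartner' M i)
      · intro z hz
        have hpair : ((i+1,z),(i, vpartner' M i z)) ∈ M := vpartner'_spec (key z hz)
        simp only [Finset.mem_coe, Finset.mem_filter, Finset.mem_Icc] at hz
        obtain ⟨_, hgD, hgle, _⟩ := vpair_facts hg hpair
        simp only [Finset.mem_coe, Finset.mem_filter, Finset.mem_Icc]
        refine ⟨⟨?_, le_trans hgle hz.1.2⟩, hgD⟩
        rcases eq_or_lt_of_le hz.1.2 with heq | hzx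
        · have hpair' : ((i+1,x),(i, vpartner' M i z)) ∈ M := by rw [← heq]; exact hpair
          have : vpartner' M i z = y := vsimple_fst hg hpair' hP
          omega
        · by_contra hgy
          push_neg at hgy
          exact vncross hg hpair hP hgy (by omega) hzx
      · intro z hz z' hz' heq
        simp only [Finset.coe_filter, Set.mem_setOf_eq, Finset.mem_Icc] at hz hz'
        have h1 : ((i+1,z),(i, vpartner' M i z)) ∈ M := vpartner'_spec (key z (by
          simp only [Finset.mem_filter, Finset.mem_Icc]; exact hz))
        have h2 : ((i+1,z'),(i, vpartner' M i z')) ∈ M := vpartner'_spec (key z' (by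
          simp only [Finset.mem_filter, Finset.mem_Icc]; exact hz'))
        rw [heq] at h1
        exact vsimple_snd hg h1 h2
    have hky := h.2 y (le_of_lt hlt)
    unfold rowCnt at hky
    rw [cnt_split (Nat.le_succ y) (le_of_lt hlt) (P := fun z => (i+1,z) ∈ D),
      cnt_single] at hky
    by_cases hyT : (i+1,y) ∈ D
    · have hvp : ((i+1,y),(i,y)) ∈ M := hg.2.2.2 (vInit_mem hyT hyD)
      have := vsimple_snd hg hvp hP
      omega
    · rw [if_neg hyT] at hky
      omega

/-- In an outcome there is no unmatched closer strictly left of an unmatched opener. -/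
lemma v_gap {i : ℕ} {D : Finset (ℕ×ℕ)} {M : Finset ((ℕ×ℕ)×(ℕ×ℕ))} (ho : VOutcome i D M) :
    ∀ n y x, (i,y) ∈ D → (i+1,x) ∈ D → (i,y) ∉ matchedBoxes M →
      (i+1,x) ∉ matchedBoxes M → y < x → x - y ≤ n → False := by
  intro n
  induction n with
  | zero => intro y x _ _ _ _ h1 h2; omega
  | succ n ih =>
    intro y x hyD hxD hyu hxu hlt hle
    by_cases hall : ∀ q ∈ D, (q.1 = i ∨ q.1 = i + 1) → y < q.2 → q.2 < x → q ∈ matchedBoxes M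
    · exact ho.2 _ ⟨x, y, hxD, hyD, hlt, hxu, hyu, hall, rfl⟩
    · push_neg at hall
      obtain ⟨⟨q1, q2⟩, hqD, hrow, h1, h2, hqu⟩ := hall
      simp only at hrow h1 h2
      rcases hrow with rfl | rfl
      · exact ih q2 x hqD hxD hqu hxu h2 (by omega)
      · exact ih y q2 hyD hqD hyu hqu h1 (by omega)

/-- In an outcome, an unmatched opener satisfies `UV`. -/
lemma v_unmatched_UV {i : ℕ} {D : Finset (ℕ×ℕ)} {M : Finset ((ℕ×ℕ)×(ℕ×ℕ))}
    (ho : VOutcome i D M) {x : ℕ} (hxD : (i+1,x) ∈ D)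
    (hxu : (i+1,x) ∉ matchedBoxes M) : UV i D x := by
  have hg : VGood i D M := vGood_of_reach ho.1
  refine ⟨hxD, ?_⟩
  intro k hk
  by_contra hcon
  push_neg at hcon
  -- matched closers in [k,x] inject into openers in [k,x] other than x
  have hBm : ((Finset.Icc k x).filter (fun z => (i,z) ∈ D ∧ (i,z) ∈ matchedBoxes M)).card
      ≤ (((Finset.Icc k x).filter (fun z => (i+1,z) ∈ D)).erase x).card := by
    apply Finset.card_le_card_of_injOn (vpartner M i)
    · intro z hz
      simp only [Finset.mem_coe, Finset.mem_filter, Finset.mem_Icc] at hz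
      obtain ⟨⟨hz1, hz2⟩, hzD, hzm⟩ := hz
      obtain ⟨w, hw⟩ := matched_bot hg hzm
      have hpair : ((i+1, vpartner M i z),(i,z)) ∈ M := vpartner_spec ⟨w, hw⟩
      obtain ⟨hfD, _, hlef, hbet⟩ := vpair_facts hg hpair
      have hfx : vpartner M i z ≠ x := by
        intro he
        rw [he] at hpair
        exact hxu (mem_matchedBoxes.2 ⟨_, hpair, Or.inl rfl⟩)
      have hfle : vpartner M i z ≤ x := by
        by_contra hgt
        push_neg at hgt
        rcases eq_or_lt_of_le hz2 with rfl | hzx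
        · have : ((i+1,z),(i,z)) ∈ M := hg.2.2.2 (vInit_mem hxD hzD)
          exact hxu (mem_matchedBoxes.2 ⟨_, this, Or.inl rfl⟩)
        · have := hbet (i+1,x) hxD (Or.inr rfl) (by simpa using hzx) (by simpa using hgt)
          exact hxu this
      simp only [Finset.mem_coe, Finset.mem_erase, Finset.mem_filter, Finset.mem_Icc]
      exact ⟨hfx, ⟨le_trans hz1 hlef, hfle⟩, hfD⟩
    · intro z hz z' hz' heq
      simp only [Finset.coe_filter, Set.mem_setOf_eq, Finset.mem_Icc] at hz hz'
      obtain ⟨w, hw⟩ := matched_bot hg hz.2.2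
      obtain ⟨w', hw'⟩ := matched_bot hg hz'.2.2
      have h1 : ((i+1, vpartner M i z),(i,z)) ∈ M := vpartner_spec ⟨w, hw⟩
      have h2 : ((i+1, vpartner M i z'),(i,z')) ∈ M := vpartner_spec ⟨w', hw'⟩
      rw [heq] at h1
      exact vsimple_fst hg h1 h2
  have hsplit : ((Finset.Icc k x).filter (fun z => (i,z) ∈ D ∧ (i,z) ∈ matchedBoxes M)).card
      + ((Finset.Icc k x).filter (fun z => (i,z) ∈ D ∧ (i,z) ∉ matchedBoxes M)).card
      = rowCnt D i k x := by
    unfold rowCnt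
    rw [← Finset.filter_filter, ← Finset.filter_filter]
    exact Finset.card_filter_add_card_filter_not (fun z => (i,z) ∈ matchedBoxes M)
  have hxmem : x ∈ (Finset.Icc k x).filter (fun z => (i+1,z) ∈ D) := by
    simp [Finset.mem_filter, Finset.mem_Icc, hk, hxD]
  rw [Finset.card_erase_of_mem hxmem] at hBm
  have hpos : 0 < ((Finset.Icc k x).filter (fun z => (i+1,z) ∈ D)).card :=
    Finset.card_pos.2 ⟨x, hxmem⟩
  have hcntT : ((Finset.Icc k x).filter (fun z => (i+1,z) ∈ D)).card = rowCnt D (i+1) k x := rfl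
  -- there is an unmatched closer in [k,x]
  have hBu : 0 < ((Finset.Icc k x).filter (fun z => (i,z) ∈ D ∧ (i,z) ∉ matchedBoxes M)).card := by
    omega
  obtain ⟨y, hy⟩ := Finset.card_pos.1 hBu
  simp only [Finset.mem_filter, Finset.mem_Icc] at hy
  obtain ⟨⟨hy1, hy2⟩, hyD, hyu⟩ := hy
  have hyx : y < x := by
    rcases eq_or_lt_of_le hy2 with rfl | h
    · exfalso
      have : ((i+1,y),(i,y)) ∈ M := hg.2.2.2 (vInit_mem hxD hyD)
      exact hxu (mem_matchedBoxes.2 ⟨_, this, Or.inl rfl⟩)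
    · exact h
  exact v_gap ho (x - y) y x hyD hxD hyu hxu hyx le_rfl

/-- Characterization of unmatched openers in a vertical pairing outcome. -/
lemma vChar {i : ℕ} {D : Finset (ℕ×ℕ)} {M : Finset ((ℕ×ℕ)×(ℕ×ℕ))} (ho : VOutcome i D M)
    (x : ℕ) : ((i+1,x) ∈ D ∧ (i+1,x) ∉ matchedBoxes M) ↔ UV i D x := by
  constructor
  · rintro ⟨h1, h2⟩
    exact v_unmatched_UV ho h1 h2
  · intro h
    exact ⟨h.1, vUV_unmatched (vGood_of_reach ho.1) h⟩

end KC

namespace KC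
open Finset

lemma vOutcome_exists (i : ℕ) (D : Finset (ℕ×ℕ)) : ∃ M, VOutcome i D M := by
  have main : ∀ n (M : Finset ((ℕ×ℕ)×(ℕ×ℕ))),
      Relation.ReflTransGen (VStep i D) (vInit i D) M → M ⊆ D ×ˢ D →
      (D ×ˢ D).card ≤ n + M.card → ∃ N, VOutcome i D N := by
    intro n
    induction n with
    | zero =>
      intro M hreach hsub hcard
      by_cases hs : ∃ M', VStep i D M M'
      · exfalso
        obtain ⟨M', cx, cy, hcx, hcy, _, hucx, _, _, rfl⟩ := hs
        have hnm : ((i+1,cx),(i,cy)) ∉ M := by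
          intro hm
          exact hucx (mem_matchedBoxes.2 ⟨_, hm, Or.inl rfl⟩)
        have hsub' : insert ((i+1,cx),(i,cy)) M ⊆ D ×ˢ D := by
          intro p hp
          rcases Finset.mem_insert.1 hp with rfl | hp
          · exact Finset.mem_product.2 ⟨hcx, hcy⟩
          · exact hsub hp
        have := Finset.card_le_card hsub'
        rw [Finset.card_insert_of_notMem hnm] at this
        omega
      · push_neg at hs
        exact ⟨M, hreach, fun M' h => (hs M') h⟩
    | succ n ih =>
      intro M hreach hsub hcard
      by_cases hs : ∃ M', VStep i D M M'
      · obtain ⟨M', hM'⟩ := hs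
        obtain ⟨cx, cy, hcx, hcy, _, hucx, _, _, he⟩ := hM'
        have hnm : ((i+1,cx),(i,cy)) ∉ M := by
          intro hm
          exact hucx (mem_matchedBoxes.2 ⟨_, hm, Or.inl rfl⟩)
        have hsub' : M' ⊆ D ×ˢ D := by
          rw [he]
          intro p hp
          rcases Finset.mem_insert.1 hp with rfl | hp
          · exact Finset.mem_product.2 ⟨hcx, hcy⟩
          · exact hsub hp
        have hcard' : M'.card = M.card + 1 := by
          rw [he, Finset.card_insert_of_notMem hnm]
        refine ih M' (hreach.tail ?_) hsub' (by omega)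
        exact ⟨cx, cy, hcx, hcy, by assumption, hucx, by assumption, by assumption, he⟩
      · push_neg at hs
        exact ⟨M, hreach, fun M' h => (hs M') h⟩
  have hinit : vInit i D ⊆ D ×ˢ D := by
    intro p hp
    obtain ⟨b, rfl, h1, h2⟩ := mem_vInit hp
    exact Finset.mem_product.2 ⟨h1, h2⟩
  exact main (D ×ˢ D).card (vInit i D) Relation.ReflTransGen.refl hinit (by omega)

lemma raiseRel_iff {i : ℕ} {D E : Finset (ℕ×ℕ)} :
    RaiseRel i D E ↔
      ∃ g, UV i D g ∧ (∀ x, UV i D x → x ≤ g) ∧ E = insert (i,g) (D.erase (i+1,g)) := by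
  constructor
  · rintro ⟨M, g, ho, hmem, hum, hmax, rfl⟩
    refine ⟨g, (vChar ho g).1 ⟨hmem, hum⟩, ?_, rfl⟩
    intro x hx
    obtain ⟨h1, h2⟩ := (vChar ho x).2 hx
    exact hmax x h1 h2
  · rintro ⟨g, hUV, hmax, rfl⟩
    obtain ⟨M, ho⟩ := vOutcome_exists i D
    obtain ⟨h1, h2⟩ := (vChar ho g).2 hUV
    exact ⟨M, g, ho, h1, h2, fun c' hc1 hc2 => hmax c' ((vChar ho c').1 ⟨hc1, hc2⟩), rfl⟩

lemma raiseRel_exists_iff {i : ℕ} {D : Finset (ℕ×ℕ)} :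
    (∃ E, RaiseRel i D E) ↔ ∃ x, UV i D x := by
  constructor
  · rintro ⟨E, hE⟩
    rw [raiseRel_iff] at hE
    obtain ⟨g, h, _, _⟩ := hE
    exact ⟨g, h⟩
  · rintro ⟨x, hx⟩
    classical
    set S := ((D.filter (fun p => p.1 = i+1)).image Prod.snd).filter (fun z => UV i D z) with hS
    have hmemS : ∀ z, z ∈ S ↔ UV i D z := by
      intro z
      simp only [hS, Finset.mem_filter, Finset.mem_image]
      constructor
      · rintro ⟨_, h⟩; exact h
      · intro h
        exact ⟨⟨(i+1,z), ⟨h.1, rfl⟩, rfl⟩, h⟩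
    have hne : S.Nonempty := ⟨x, (hmemS x).2 hx⟩
    refine ⟨_, raiseRel_iff.2 ⟨S.max' hne, (hmemS _).1 (S.max'_mem hne), ?_, rfl⟩⟩
    intro x' hx'
    exact S.le_max' x' ((hmemS x').2 hx')

end KC

namespace KC
open Finset

/-- Static properties of a horizontal matching. -/
def HGood (c : ℕ) (D : Finset (ℕ×ℕ)) (M : Finset ((ℕ×ℕ)×(ℕ×ℕ))) : Prop :=
  (∀ p ∈ M, ∃ a b, p = ((a,c+1),(b,c)) ∧ (a,c+1) ∈ D ∧ (b,c) ∈ D ∧ a ≤ b ∧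
      (∀ q ∈ D, (q.2 = c ∨ q.2 = c + 1) → a < q.1 → q.1 < b → q ∈ matchedBoxes M)) ∧
  (∀ p ∈ M, ∀ q ∈ M, (p.1 = q.1 ∨ p.2 = q.2) → p = q) ∧
  (∀ p ∈ M, ∀ q ∈ M, ∀ a b a' b', p = ((a,c+1),(b,c)) → q = ((a',c+1),(b',c)) →
      a < a' → a' ≤ b → b < b' → False) ∧
  hInit c D ⊆ M

lemma hInit_mem {c : ℕ} {D : Finset (ℕ×ℕ)} {b : ℕ} (h1 : (b,c+1) ∈ D) (h2 : (b,c) ∈ D) :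
    ((b,c+1),(b,c)) ∈ hInit c D := by
  unfold hInit
  rw [Finset.mem_image]
  exact ⟨(b,c+1), by simp [Finset.mem_filter, h1, h2], rfl⟩

lemma mem_hInit {c : ℕ} {D : Finset (ℕ×ℕ)} {p : (ℕ×ℕ)×(ℕ×ℕ)} (h : p ∈ hInit c D) :
    ∃ b, p = ((b,c+1),(b,c)) ∧ (b,c+1) ∈ D ∧ (b,c) ∈ D := by
  unfold hInit at h
  rw [Finset.mem_image] at h
  obtain ⟨q, hq, rfl⟩ := h
  rw [Finset.mem_filter] at hq
  obtain ⟨hqD, hq1, hq2⟩ := hq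
  refine ⟨q.1, ?_, ?_, hq2⟩
  · ext <;> simp [hq1]
  · rw [← hq1]; exact hqD

lemma hGood_hInit (c : ℕ) (D : Finset (ℕ×ℕ)) : HGood c D (hInit c D) := by
  refine ⟨?_, ?_, ?_, subset_rfl⟩
  · intro p hp
    obtain ⟨b, rfl, h1, h2⟩ := mem_hInit hp
    exact ⟨b, b, rfl, h1, h2, le_rfl, fun q _ _ hlt1 hlt2 => absurd (hlt1.trans hlt2) (lt_irrefl _)⟩
  · intro p hp q hq hpq
    obtain ⟨b, rfl, _, _⟩ := mem_hInit hp
    obtain ⟨b', rfl, _, _⟩ := mem_hInit hq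
    rcases hpq with h | h <;> · simp only [Prod.mk.injEq] at h; simp [h]
  · intro p hp q hq a b a' b' hp' hq' h1 h2 h3
    obtain ⟨e, rfl, _, _⟩ := mem_hInit hp
    obtain ⟨e', rfl, _, _⟩ := mem_hInit hq
    simp only [Prod.mk.injEq] at hp' hq'
    omega

lemma hGood_step {c : ℕ} {D : Finset (ℕ×ℕ)} {M M' : Finset ((ℕ×ℕ)×(ℕ×ℕ))}
    (hg : HGood c D M) (hs : HStep c D M M') : HGood c D M' := by
  obtain ⟨shape, simple, ncross, init⟩ := hg
  obtain ⟨rx, ry, hrx, hry, hlt, hurx, hury, hbet, rfl⟩ := hs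
  have hsub : M ⊆ insert ((rx,c+1),(ry,c)) M := Finset.subset_insert _ _
  refine ⟨?_, ?_, ?_, init.trans hsub⟩
  · intro p hp
    rcases Finset.mem_insert.1 hp with rfl | hp
    · exact ⟨rx, ry, rfl, hrx, hry, le_of_lt hlt,
        fun q hq hrow h1 h2 => matchedBoxes_mono hsub (hbet q hq hrow h1 h2)⟩
    · obtain ⟨a, b, heq, h1, h2, h3, h4⟩ := shape p hp
      exact ⟨a, b, heq, h1, h2, h3,
        fun q hq hrow hl1 hl2 => matchedBoxes_mono hsub (h4 q hq hrow hl1 hl2)⟩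
  · intro p hp q hq hpq
    rcases Finset.mem_insert.1 hp with rfl | hp <;> rcases Finset.mem_insert.1 hq with rfl | hq
    · rfl
    · exfalso
      rcases hpq with h | h
      · exact hurx (mem_matchedBoxes.2 ⟨q, hq, Or.inl h.symm⟩)
      · exact hury (mem_matchedBoxes.2 ⟨q, hq, Or.inr h.symm⟩)
    · exfalso
      rcases hpq with h | h
      · exact hurx (mem_matchedBoxes.2 ⟨p, hp, Or.inl h⟩)
      · exact hury (mem_matchedBoxes.2 ⟨p, hp, Or.inr h⟩)
    · exact simple p hp q hq hpq
  · intro p hp q hq a b a' b' hp' hq' h1 h2 h3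
    rcases Finset.mem_insert.1 hp with rfl | hp <;> rcases Finset.mem_insert.1 hq with rfl | hq
    · simp only [Prod.mk.injEq] at hp' hq'; omega
    · -- p new : (a,b) = (rx,ry) ; q old : rx < a' ≤ ry < b'
      simp only [Prod.mk.injEq] at hp'
      obtain ⟨a2, b2, heq, hq1, hq2, hle, hbet'⟩ := shape q hq
      rw [hq'] at heq
      simp only [Prod.mk.injEq] at heq
      rcases lt_or_eq_of_le h2 with hlt' | heq'
      · -- a' < ry : (ry,c) strictly between q's pair
        have := hbet' (ry, c) hry (Or.inl rfl) (by simp; omega) (by simp; omega)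
        exact hury this
      · -- a' = ry : hInit pair at row ry
        have ha2ry : a2 = ry := by omega
        rw [ha2ry] at hq1
        have : ((ry,c+1),(ry,c)) ∈ M := init (hInit_mem hq1 hry)
        exact hury (mem_matchedBoxes.2 ⟨_, this, Or.inr rfl⟩)
    · -- q new : (a',b') = (rx,ry) ; p old : a < rx ≤ b < ry
      simp only [Prod.mk.injEq] at hq'
      obtain ⟨a2, b2, heq, hp1, hp2, hle, hbet'⟩ := shape p hp
      rw [hp'] at heq
      simp only [Prod.mk.injEq] at heq
      rcases lt_or_eq_of_le h2 with hlt' | heq'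
      · -- rx < b : (rx,c+1) strictly between p's pair
        have := hbet' (rx, c+1) hrx (Or.inr rfl) (by simp; omega) (by simp; omega)
        exact hurx this
      · -- rx = b : hInit pair at row rx
        have hb2rx : b2 = rx := by omega
        rw [hb2rx] at hp2
        have : ((rx,c+1),(rx,c)) ∈ M := init (hInit_mem hrx hp2)
        exact hurx (mem_matchedBoxes.2 ⟨_, this, Or.inl rfl⟩)
    · exact ncross p hp q hq a b a' b' hp' hq' h1 h2 h3

lemma hGood_of_reach {c : ℕ} {D : Finset (ℕ×ℕ)} {M : Finset ((ℕ×ℕ)×(ℕ×ℕ))}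
    (h : Relation.ReflTransGen (HStep c D) (hInit c D) M) : HGood c D M := by
  induction h with
  | refl => exact hGood_hInit c D
  | tail _ hstep ih => exact hGood_step ih hstep

lemma matched_left {c : ℕ} {D : Finset (ℕ×ℕ)} {M : Finset ((ℕ×ℕ)×(ℕ×ℕ))} {x : ℕ}
    (hg : HGood c D M) (hx : (x,c+1) ∈ matchedBoxes M) : ∃ y, ((x,c+1),(y,c)) ∈ M := by
  obtain ⟨p, hp, hc⟩ := mem_matchedBoxes.1 hx
  obtain ⟨a, b, rfl, _, _, _, _⟩ := hg.1 p hp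
  rcases hc with h | h <;> simp only [Prod.mk.injEq] at h
  · obtain ⟨h1, _⟩ := h; rw [← h1]; exact ⟨b, hp⟩
  · omega

lemma matched_right {c : ℕ} {D : Finset (ℕ×ℕ)} {M : Finset ((ℕ×ℕ)×(ℕ×ℕ))} {y : ℕ}
    (hg : HGood c D M) (hy : (y,c) ∈ matchedBoxes M) : ∃ x, ((x,c+1),(y,c)) ∈ M := by
  obtain ⟨p, hp, hc⟩ := mem_matchedBoxes.1 hy
  obtain ⟨a', b', rfl, _, _, _, _⟩ := hg.1 p hp
  rcases hc with h | h <;> simp only [Prod.mk.injEq] at h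
  · omega
  · obtain ⟨h1, _⟩ := h; rw [← h1]; exact ⟨a', hp⟩

lemma hpair_facts {c : ℕ} {D : Finset (ℕ×ℕ)} {M : Finset ((ℕ×ℕ)×(ℕ×ℕ))}
    (hg : HGood c D M) {a b : ℕ} (hp : ((a,c+1),(b,c)) ∈ M) :
    (a,c+1) ∈ D ∧ (b,c) ∈ D ∧ a ≤ b ∧
      ∀ q ∈ D, (q.2 = c ∨ q.2 = c + 1) → a < q.1 → q.1 < b → q ∈ matchedBoxes M := by
  obtain ⟨a', b', heq, h1, h2, h3, h4⟩ := hg.1 _ hp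
  simp only [Prod.mk.injEq] at heq
  obtain ⟨⟨ha, _⟩, hb, _⟩ := heq
  subst ha; subst hb
  exact ⟨h1, h2, h3, h4⟩

lemma hsimple_fst {c : ℕ} {D : Finset (ℕ×ℕ)} {M : Finset ((ℕ×ℕ)×(ℕ×ℕ))}
    (hg : HGood c D M) {a b b' : ℕ} (hp : ((a,c+1),(b,c)) ∈ M)
    (hq : ((a,c+1),(b',c)) ∈ M) : b = b' := by
  have := hg.2.1 _ hp _ hq (Or.inl rfl)
  simp only [Prod.mk.injEq] at this
  omega

lemma hsimple_snd {c : ℕ} {D : Finset (ℕ×ℕ)} {M : Finset ((ℕ×ℕ)×(ℕ×ℕ))}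
    (hg : HGood c D M) {a a' b : ℕ} (hp : ((a,c+1),(b,c)) ∈ M)
    (hq : ((a',c+1),(b,c)) ∈ M) : a = a' := by
  have := hg.2.1 _ hp _ hq (Or.inr rfl)
  simp only [Prod.mk.injEq] at this
  omega

lemma hncross {c : ℕ} {D : Finset (ℕ×ℕ)} {M : Finset ((ℕ×ℕ)×(ℕ×ℕ))}
    (hg : HGood c D M) {a b a' b' : ℕ} (hp : ((a,c+1),(b,c)) ∈ M)
    (hq : ((a',c+1),(b',c)) ∈ M) (h1 : a < a') (h2 : a' ≤ b) (h3 : b < b') : False :=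
  hg.2.2.1 _ hp _ hq a b a' b' rfl rfl h1 h2 h3

/-- The opener matched to a given closer in a horizontal matching. -/
noncomputable def hpartner (M : Finset ((ℕ×ℕ)×(ℕ×ℕ))) (c z : ℕ) : ℕ :=
  if hz : ∃ w, ((w,c+1),(z,c)) ∈ M then hz.choose else 0

lemma hpartner_spec {M : Finset ((ℕ×ℕ)×(ℕ×ℕ))} {c z : ℕ}
    (hz : ∃ w, ((w,c+1),(z,c)) ∈ M) : ((hpartner M c z,c+1),(z,c)) ∈ M := by
  unfold hpartner
  rw [dif_pos hz]
  exact hz.choose_spec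

/-- The closer matched to a given opener in a horizontal matching. -/
noncomputable def hpartner' (M : Finset ((ℕ×ℕ)×(ℕ×ℕ))) (c z : ℕ) : ℕ :=
  if hz : ∃ w, ((z,c+1),(w,c)) ∈ M then hz.choose else 0

lemma hpartner'_spec {M : Finset ((ℕ×ℕ)×(ℕ×ℕ))} {c z : ℕ}
    (hz : ∃ w, ((z,c+1),(w,c)) ∈ M) : ((z,c+1),(hpartner' M c z,c)) ∈ M := by
  unfold hpartner'
  rw [dif_pos hz]
  exact hz.choose_spec

end KC

namespace KC
open Finset

/-- If `UH` holds then the box is unmatched in any good horizontal matching. -/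
lemma hUH_unmatched {c : ℕ} {D : Finset (ℕ×ℕ)} {M : Finset ((ℕ×ℕ)×(ℕ×ℕ))}
    (hg : HGood c D M) {x : ℕ} (h : UH c D x) : (x,c+1) ∉ matchedBoxes M := by
  intro hmat
  obtain ⟨y, hP⟩ := matched_left hg hmat
  obtain ⟨hxD, hyD, hxy, hbet⟩ := hpair_facts hg hP
  rcases eq_or_lt_of_le hxy with rfl | hlt
  · -- y = x : (x,c) ∈ D contradicts UH at k = x
    have hk := h.2 x le_rfl
    unfold colCnt at hk
    rw [cnt_single, cnt_single, if_pos hyD] at hk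
    split at hk <;> omega
  · -- strict : x < y
    obtain ⟨y', rfl⟩ : ∃ y', y = y' + 1 := ⟨y - 1, by omega⟩
    have key : ∀ z ∈ (Finset.Icc x y').filter (fun z => (z,c+1) ∈ D),
        (∃ w, ((z,c+1),(w,c)) ∈ M) := by
      intro z hz
      simp only [Finset.mem_filter, Finset.mem_Icc] at hz
      obtain ⟨⟨hz1, hz2⟩, hzD⟩ := hz
      rcases eq_or_lt_of_le hz1 with rfl | hxz
      · exact ⟨y' + 1, hP⟩
      · have := hbet (z, c+1) hzD (Or.inr rfl) (by simpa using hxz) (by simp; omega)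
        exact matched_left hg this
    have hcard : ((Finset.Icc x y').filter (fun z => (z,c+1) ∈ D)).card
        ≤ ((Finset.Icc x (y'+1)).filter (fun z => (z,c) ∈ D)).card := by
      apply Finset.card_le_card_of_injOn (hpartner' M c)
      · intro z hz
        have hpair : ((z,c+1),(hpartner' M c z,c)) ∈ M := hpartner'_spec (key z hz)
        simp only [Finset.mem_coe, Finset.mem_filter, Finset.mem_Icc] at hz
        obtain ⟨hD1, _, hle', _⟩ := hpair_facts hg hpair
        simp only [Finset.mem_coe, Finset.mem_filter, Finset.mem_Icc]
        refine ⟨⟨le_trans hz.1.1 hle', ?_⟩, by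
          exact (hpair_facts hg hpair).2.1⟩
        -- hpartner' M c z ≤ y'+1
        rcases eq_or_lt_of_le hz.1.1 with heq | hxz
        · have hpair' : ((x,c+1),(hpartner' M c z,c)) ∈ M := by rw [heq]; exact hpair
          have : hpartner' M c z = y' + 1 := hsimple_fst hg hpair' hP
          omega
        · by_contra hgy
          push_neg at hgy
          exact hncross hg hP hpair hxz (by omega) hgy
      · intro z hz z' hz' heq
        simp only [Finset.coe_filter, Set.mem_setOf_eq, Finset.mem_Icc] at hz hz'
        have h1 : ((z,c+1),(hpartner' M c z,c)) ∈ M := hpartner'_spec (key z (by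
          simp only [Finset.mem_filter, Finset.mem_Icc]; exact hz))
        have h2 : ((z',c+1),(hpartner' M c z',c)) ∈ M := hpartner'_spec (key z' (by
          simp only [Finset.mem_filter, Finset.mem_Icc]; exact hz'))
        rw [heq] at h1
        exact hsimple_snd hg h1 h2
    have hky := h.2 (y'+1) (by omega)
    unfold colCnt at hky
    rw [cnt_split (by omega : x ≤ y' + 1) (Nat.le_succ y') (P := fun z => (z,c+1) ∈ D),
      cnt_single] at hky
    by_cases hyT : (y'+1,c+1) ∈ D
    · have hvp : ((y'+1,c+1),(y'+1,c)) ∈ M := hg.2.2.2 (hInit_mem hyT hyD)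
      have := hsimple_snd hg hvp hP
      omega
    · rw [if_neg hyT] at hky
      omega

/-- In a horizontal outcome there is no unmatched opener strictly above an unmatched closer. -/
lemma h_gap {c : ℕ} {D : Finset (ℕ×ℕ)} {M : Finset ((ℕ×ℕ)×(ℕ×ℕ))} (ho : HOutcome c D M) :
    ∀ n a b, (a,c+1) ∈ D → (b,c) ∈ D → (a,c+1) ∉ matchedBoxes M →
      (b,c) ∉ matchedBoxes M → a < b → b - a ≤ n → False := by
  intro n
  induction n with
  | zero => intro a b _ _ _ _ h1 h2; omega
  | succ n ih =>
    intro a b haD hbD hau hbu hlt hle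
    by_cases hall : ∀ q ∈ D, (q.2 = c ∨ q.2 = c + 1) → a < q.1 → q.1 < b → q ∈ matchedBoxes M
    · exact ho.2 _ ⟨a, b, haD, hbD, hlt, hau, hbu, hall, rfl⟩
    · push_neg at hall
      obtain ⟨⟨q1, q2⟩, hqD, hrow, h1, h2, hqu⟩ := hall
      simp only at hrow h1 h2
      rcases hrow with rfl | rfl
      · exact ih a q1 haD hqD hau hqu h1 (by omega)
      · exact ih q1 b hqD hbD hqu hbu h2 (by omega)

/-- In a horizontal outcome, an unmatched opener satisfies `UH`. -/
lemma h_unmatched_UH {c : ℕ} {D : Finset (ℕ×ℕ)} {M : Finset ((ℕ×ℕ)×(ℕ×ℕ))}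
    (ho : HOutcome c D M) {x : ℕ} (hxD : (x,c+1) ∈ D)
    (hxu : (x,c+1) ∉ matchedBoxes M) : UH c D x := by
  have hg : HGood c D M := hGood_of_reach ho.1
  refine ⟨hxD, ?_⟩
  intro k hk
  by_contra hcon
  push_neg at hcon
  have hBm : ((Finset.Icc x k).filter (fun z => (z,c) ∈ D ∧ (z,c) ∈ matchedBoxes M)).card
      ≤ (((Finset.Icc x k).filter (fun z => (z,c+1) ∈ D)).erase x).card := by
    apply Finset.card_le_card_of_injOn (hpartner M c)
    · intro z hz
      simp only [Finset.mem_coe, Finset.mem_filter, Finset.mem_Icc] at hz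
      obtain ⟨⟨hz1, hz2⟩, hzD, hzm⟩ := hz
      obtain ⟨w, hw⟩ := matched_right hg hzm
      have hpair : ((hpartner M c z,c+1),(z,c)) ∈ M := hpartner_spec ⟨w, hw⟩
      obtain ⟨hfD, _, hlef, hbet⟩ := hpair_facts hg hpair
      have hfx : hpartner M c z ≠ x := by
        intro he
        rw [he] at hpair
        exact hxu (mem_matchedBoxes.2 ⟨_, hpair, Or.inl rfl⟩)
      have hfge : x ≤ hpartner M c z := by
        by_contra hgt
        push_neg at hgt
        rcases eq_or_lt_of_le hz1 with rfl | hzx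
        · have : ((x,c+1),(x,c)) ∈ M := hg.2.2.2 (hInit_mem hxD hzD)
          exact hxu (mem_matchedBoxes.2 ⟨_, this, Or.inl rfl⟩)
        · have := hbet (x,c+1) hxD (Or.inr rfl) (by simpa using hgt) (by simpa using hzx)
          exact hxu this
      simp only [Finset.mem_coe, Finset.mem_erase, Finset.mem_filter, Finset.mem_Icc]
      exact ⟨hfx, ⟨hfge, le_trans hlef hz2⟩, hfD⟩
    · intro z hz z' hz' heq
      simp only [Finset.coe_filter, Set.mem_setOf_eq, Finset.mem_Icc] at hz hz'
      obtain ⟨w, hw⟩ := matched_right hg hz.2.2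
      obtain ⟨w', hw'⟩ := matched_right hg hz'.2.2
      have h1 : ((hpartner M c z,c+1),(z,c)) ∈ M := hpartner_spec ⟨w, hw⟩
      have h2 : ((hpartner M c z',c+1),(z',c)) ∈ M := hpartner_spec ⟨w', hw'⟩
      rw [heq] at h1
      exact hsimple_fst hg h1 h2
  have hsplit : ((Finset.Icc x k).filter (fun z => (z,c) ∈ D ∧ (z,c) ∈ matchedBoxes M)).card
      + ((Finset.Icc x k).filter (fun z => (z,c) ∈ D ∧ (z,c) ∉ matchedBoxes M)).card
      = colCnt D c x k := by
    unfold colCnt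
    rw [← Finset.filter_filter, ← Finset.filter_filter]
    exact Finset.card_filter_add_card_filter_not (fun z => (z,c) ∈ matchedBoxes M)
  have hxmem : x ∈ (Finset.Icc x k).filter (fun z => (z,c+1) ∈ D) := by
    simp [Finset.mem_filter, Finset.mem_Icc, hk, hxD]
  rw [Finset.card_erase_of_mem hxmem] at hBm
  have hpos : 0 < ((Finset.Icc x k).filter (fun z => (z,c+1) ∈ D)).card :=
    Finset.card_pos.2 ⟨x, hxmem⟩
  have hcntT : ((Finset.Icc x k).filter (fun z => (z,c+1) ∈ D)).card = colCnt D (c+1) x k := rfl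
  have hBu : 0 < ((Finset.Icc x k).filter (fun z => (z,c) ∈ D ∧ (z,c) ∉ matchedBoxes M)).card := by
    omega
  obtain ⟨y, hy⟩ := Finset.card_pos.1 hBu
  simp only [Finset.mem_filter, Finset.mem_Icc] at hy
  obtain ⟨⟨hy1, hy2⟩, hyD, hyu⟩ := hy
  have hxy : x < y := by
    rcases eq_or_lt_of_le hy1 with rfl | h
    · exfalso
      have : ((x,c+1),(x,c)) ∈ M := hg.2.2.2 (hInit_mem hxD hyD)
      exact hxu (mem_matchedBoxes.2 ⟨_, this, Or.inl rfl⟩)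
    · exact h
  exact h_gap ho (y - x) x y hxD hyD hxu hyu hxy le_rfl

/-- Characterization of unmatched openers in a horizontal pairing outcome. -/
lemma hChar {c : ℕ} {D : Finset (ℕ×ℕ)} {M : Finset ((ℕ×ℕ)×(ℕ×ℕ))} (ho : HOutcome c D M)
    (x : ℕ) : ((x,c+1) ∈ D ∧ (x,c+1) ∉ matchedBoxes M) ↔ UH c D x := by
  constructor
  · rintro ⟨h1, h2⟩
    exact h_unmatched_UH ho h1 h2
  · intro h
    exact ⟨h.1, hUH_unmatched (hGood_of_reach ho.1) h⟩

lemma hOutcome_exists (c : ℕ) (D : Finset (ℕ×ℕ)) : ∃ M, HOutcome c D M := by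
  have main : ∀ n (M : Finset ((ℕ×ℕ)×(ℕ×ℕ))),
      Relation.ReflTransGen (HStep c D) (hInit c D) M → M ⊆ D ×ˢ D →
      (D ×ˢ D).card ≤ n + M.card → ∃ N, HOutcome c D N := by
    intro n
    induction n with
    | zero =>
      intro M hreach hsub hcard
      by_cases hs : ∃ M', HStep c D M M'
      · exfalso
        obtain ⟨M', rx, ry, hrx, hry, _, hurx, _, _, rfl⟩ := hs
        have hnm : ((rx,c+1),(ry,c)) ∉ M := by
          intro hm
          exact hurx (mem_matchedBoxes.2 ⟨_, hm, Or.inl rfl⟩)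
        have hsub' : insert ((rx,c+1),(ry,c)) M ⊆ D ×ˢ D := by
          intro p hp
          rcases Finset.mem_insert.1 hp with rfl | hp
          · exact Finset.mem_product.2 ⟨hrx, hry⟩
          · exact hsub hp
        have := Finset.card_le_card hsub'
        rw [Finset.card_insert_of_notMem hnm] at this
        omega
      · push_neg at hs
        exact ⟨M, hreach, fun M' h => (hs M') h⟩
    | succ n ih =>
      intro M hreach hsub hcard
      by_cases hs : ∃ M', HStep c D M M'
      · obtain ⟨M', hM'⟩ := hs
        obtain ⟨rx, ry, hrx, hry, _, hurx, _, _, he⟩ := hM'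
        have hnm : ((rx,c+1),(ry,c)) ∉ M := by
          intro hm
          exact hurx (mem_matchedBoxes.2 ⟨_, hm, Or.inl rfl⟩)
        have hsub' : M' ⊆ D ×ˢ D := by
          rw [he]
          intro p hp
          rcases Finset.mem_insert.1 hp with rfl | hp
          · exact Finset.mem_product.2 ⟨hrx, hry⟩
          · exact hsub hp
        have hcard' : M'.card = M.card + 1 := by
          rw [he, Finset.card_insert_of_notMem hnm]
        refine ih M' (hreach.tail ?_) hsub' (by omega)
        exact ⟨rx, ry, hrx, hry, by assumption, hurx, by assumption, by assumption, he⟩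
      · push_neg at hs
        exact ⟨M, hreach, fun M' h => (hs M') h⟩
  have hinit : hInit c D ⊆ D ×ˢ D := by
    intro p hp
    obtain ⟨b, rfl, h1, h2⟩ := mem_hInit hp
    exact Finset.mem_product.2 ⟨h1, h2⟩
  exact main (D ×ˢ D).card (hInit c D) Relation.ReflTransGen.refl hinit (by omega)

lemma rectRel_iff {c : ℕ} {D E : Finset (ℕ×ℕ)} :
    RectRel c D E ↔
      ∃ g, UH c D g ∧ (∀ x, UH c D x → g ≤ x) ∧ E = insert (g,c) (D.erase (g,c+1)) := by
  constructor
  · rintro ⟨M, g, ho, hmem, hum, hmin, rfl⟩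
    refine ⟨g, (hChar ho g).1 ⟨hmem, hum⟩, ?_, rfl⟩
    intro x hx
    obtain ⟨h1, h2⟩ := (hChar ho x).2 hx
    exact hmin x h1 h2
  · rintro ⟨g, hUH, hmin, rfl⟩
    obtain ⟨M, ho⟩ := hOutcome_exists c D
    obtain ⟨h1, h2⟩ := (hChar ho g).2 hUH
    exact ⟨M, g, ho, h1, h2, fun r' hr1 hr2 => hmin r' ((hChar ho r').1 ⟨hr1, hr2⟩), rfl⟩

lemma rectRel_exists_iff {c : ℕ} {D : Finset (ℕ×ℕ)} :
    (∃ E, RectRel c D E) ↔ ∃ x, UH c D x := by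
  constructor
  · rintro ⟨E, hE⟩
    rw [rectRel_iff] at hE
    obtain ⟨g, h, _, _⟩ := hE
    exact ⟨g, h⟩
  · rintro ⟨x, hx⟩
    classical
    set S := ((D.filter (fun p => p.2 = c+1)).image Prod.fst).filter (fun z => UH c D z) with hS
    have hmemS : ∀ z, z ∈ S ↔ UH c D z := by
      intro z
      simp only [hS, Finset.mem_filter, Finset.mem_image]
      constructor
      · rintro ⟨_, h⟩; exact h
      · intro h
        exact ⟨⟨(z,c+1), ⟨h.1, rfl⟩, rfl⟩, h⟩
    have hne : S.Nonempty := ⟨x, (hmemS x).2 hx⟩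
    refine ⟨_, rectRel_iff.2 ⟨S.min' hne, (hmemS _).1 (S.min'_mem hne), ?_, rfl⟩⟩
    intro x' hx'
    exact S.min'_le x' ((hmemS x').2 hx')

end KC

namespace KC
open Finset

lemma mem_move {D : Finset (ℕ×ℕ)} {a b p : ℕ×ℕ} :
    p ∈ insert a (D.erase b) ↔ (p = a ∨ (p ∈ D ∧ p ≠ b)) := by
  simp only [Finset.mem_insert, Finset.mem_erase]
  tauto

lemma rowCnt_left {D : Finset (ℕ×ℕ)} {i k x : ℕ} (h : k ≤ x) :
    rowCnt D i k x = (if (i,k) ∈ D then 1 else 0) + rowCnt D i (k+1) x := by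
  unfold rowCnt
  rw [cnt_split (Nat.le_succ k) h (P := fun y => (i,y) ∈ D), cnt_single]

lemma rowCnt_right {D : Finset (ℕ×ℕ)} {i k x : ℕ} (h : k ≤ x + 1) :
    rowCnt D i k (x+1) = rowCnt D i k x + (if (i,x+1) ∈ D then 1 else 0) := by
  unfold rowCnt
  rw [cnt_split h (Nat.le_succ x) (P := fun y => (i,y) ∈ D), cnt_single]

lemma rowCnt_single' (D : Finset (ℕ×ℕ)) (i k : ℕ) :
    rowCnt D i k k = if (i,k) ∈ D then 1 else 0 := cnt_single k

lemma rowCnt_high {D : Finset (ℕ×ℕ)} {i k x : ℕ} (h : x < k) : rowCnt D i k x = 0 :=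
  cnt_empty h

lemma colCnt_left {D : Finset (ℕ×ℕ)} {j k x : ℕ} (h : k ≤ x) :
    colCnt D j k x = (if (k,j) ∈ D then 1 else 0) + colCnt D j (k+1) x := by
  unfold colCnt
  rw [cnt_split (Nat.le_succ k) h (P := fun s => (s,j) ∈ D), cnt_single]

lemma colCnt_right {D : Finset (ℕ×ℕ)} {j k x : ℕ} (h : k ≤ x + 1) :
    colCnt D j k (x+1) = colCnt D j k x + (if (x+1,j) ∈ D then 1 else 0) := by
  unfold colCnt
  rw [cnt_split h (Nat.le_succ x) (P := fun s => (s,j) ∈ D), cnt_single]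

lemma colCnt_single' (D : Finset (ℕ×ℕ)) (j k : ℕ) :
    colCnt D j k k = if (k,j) ∈ D then 1 else 0 := cnt_single k

lemma colCnt_high {D : Finset (ℕ×ℕ)} {j k x : ℕ} (h : x < k) : colCnt D j k x = 0 :=
  cnt_empty h

lemma UV_notbot {r : ℕ} {D : Finset (ℕ×ℕ)} {x : ℕ} (h : UV r D x) : (r,x) ∉ D := by
  have hk := h.2 x le_rfl
  rw [rowCnt_single', rowCnt_single'] at hk
  intro hmem
  rw [if_pos hmem] at hk
  split at hk <;> omega

lemma UH_notleft {c : ℕ} {D : Finset (ℕ×ℕ)} {x : ℕ} (h : UH c D x) : (x,c) ∉ D := by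
  have hk := h.2 x le_rfl
  rw [colCnt_single', colCnt_single'] at hk
  intro hmem
  rw [if_pos hmem] at hk
  split at hk <;> omega

lemma UV_imp {r c : ℕ} {D : Finset (ℕ×ℕ)} (h : UV r D (c+1)) :
    (r,c) ∈ D → (r+1,c) ∈ D := by
  intro hrc
  have hk := h.2 c (Nat.le_succ c)
  rw [rowCnt_left (Nat.le_succ c), rowCnt_left (Nat.le_succ c),
    rowCnt_single', rowCnt_single'] at hk
  have hnb : (r,c+1) ∉ D := UV_notbot h
  rw [if_pos hrc, if_neg hnb, if_pos h.1] at hk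
  split at hk <;> [skip; omega]
  assumption

lemma UH_imp {r c : ℕ} {D : Finset (ℕ×ℕ)} (h : UH c D r) :
    (r+1,c) ∈ D → (r+1,c+1) ∈ D := by
  intro hrc
  have hk := h.2 (r+1) (Nat.le_succ r)
  rw [colCnt_left (Nat.le_succ r), colCnt_left (Nat.le_succ r),
    colCnt_single', colCnt_single'] at hk
  have hnb : (r,c) ∉ D := UH_notleft h
  rw [if_pos hrc, if_neg hnb, if_pos h.1] at hk
  split at hk <;> [skip; omega]
  assumption

lemma UV_up {r c : ℕ} {D : Finset (ℕ×ℕ)} (ht : (r+1,c+1) ∈ D) (hb : (r,c+1) ∉ D)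
    (h : UV r D c) : UV r D (c+1) := by
  refine ⟨ht, ?_⟩
  intro k hk
  rcases eq_or_lt_of_le hk with rfl | hlt
  · rw [rowCnt_single', rowCnt_single', if_pos ht, if_neg hb]
    omega
  · have hkc : k ≤ c := by omega
    have h1 := h.2 k hkc
    rw [rowCnt_right (by omega), rowCnt_right (by omega), if_pos ht, if_neg hb]
    omega

lemma UH_down {r c : ℕ} {D : Finset (ℕ×ℕ)} (hb : (r,c+1) ∈ D) (hnb : (r,c) ∉ D)
    (h : UH c D (r+1)) : UH c D r := by
  refine ⟨hb, ?_⟩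
  intro k hk
  rcases eq_or_lt_of_le hk with rfl | hlt
  · rw [colCnt_single', colCnt_single', if_pos hb, if_neg hnb]
    omega
  · have h1 := h.2 k (by omega)
    rw [colCnt_left (by omega : r ≤ k), colCnt_left (by omega : r ≤ k),
      if_pos hb, if_neg hnb]
    omega

end KC

namespace KC
open Finset

section RSeries
variable {r c : ℕ} {D : Finset (ℕ×ℕ)}

lemma mem_rowmove_eq {i a b y : ℕ} :
    ((i,y) ∈ insert (i,a) (D.erase (i,b))) ↔ (y = a ∨ ((i,y) ∈ D ∧ y ≠ b)) := by
  rw [mem_move]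
  simp only [Prod.mk.injEq, true_and, ne_eq]

lemma mem_rowmove_ne {i i' a b y : ℕ} (h : i' ≠ i) :
    ((i',y) ∈ insert (i,a) (D.erase (i,b))) ↔ (i',y) ∈ D := by
  rw [mem_move]
  simp only [Prod.mk.injEq, ne_eq]
  constructor
  · rintro (⟨h1, h2⟩ | ⟨hm, _⟩)
    · exact absurd h1 h
    · exact hm
  · intro hm
    refine Or.inr ⟨hm, fun hh => h hh.1⟩

lemma rowCnt_rowmove_ne {i i' a b : ℕ} (h : i' ≠ i) (k x : ℕ) :
    rowCnt (insert (i,a) (D.erase (i,b))) i' k x = rowCnt D i' k x := by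
  unfold rowCnt
  exact cnt_congr (fun y => mem_rowmove_ne h) k x

lemma rowCnt_rowmove_eq {i a b : ℕ} (hin : (i,b) ∈ D) (hout : (i,a) ∉ D) (k x : ℕ) :
    rowCnt (insert (i,a) (D.erase (i,b))) i k x + (if k ≤ b ∧ b ≤ x then 1 else 0)
      = rowCnt D i k x + (if k ≤ a ∧ a ≤ x then 1 else 0) := by
  unfold rowCnt
  exact cnt_swap (fun y => mem_rowmove_eq) hin hout k x

/-- ρ = r transfer, generic columns. -/
lemma UV_R1 (hin : (r,c+1) ∈ D) (hout : (r,c) ∉ D)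
    (himp : (r+1,c) ∈ D → (r+1,c+1) ∈ D) {x : ℕ} (hx1 : x ≠ c) (hx2 : x ≠ c+1) :
    UV r (insert (r,c) (D.erase (r,c+1))) x ↔ UV r D x := by
  have hbot := rowCnt_rowmove_eq (D := D) (i := r) (a := c) (b := c+1) hin hout
  have htop := rowCnt_rowmove_ne (D := D) (i := r) (i' := r+1) (a := c) (b := c+1) (by omega)
  have hmemtop : ∀ y, ((r+1,y) ∈ insert ((r:ℕ),c) (D.erase (r,c+1))) ↔ (r+1,y) ∈ D :=
    fun y => mem_rowmove_ne (by omega)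
  constructor
  · rintro ⟨hm, hcnt⟩
    refine ⟨(hmemtop x).1 hm, ?_⟩
    intro k hk
    have e := hbot k x
    have t := htop k x
    rcases lt_or_gt_of_ne hx1 with hxc | hxc
    · have := hcnt k hk
      rw [if_neg (by omega), if_neg (by omega)] at e
      omega
    · have hx2' : c+2 ≤ x := by omega
      by_cases hkc : k ≤ c
      · have := hcnt k hk
        rw [if_pos (by omega), if_pos (by omega)] at e
        omega
      · by_cases hkc1 : k = c+1
        · subst hkc1
          have ec := hbot c x
          rw [if_pos (by omega), if_pos (by omega)] at ec
          have ec1 := hbot (c+1) x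
          rw [if_pos (by omega), if_neg (by omega)] at ec1
          have ec2 := hbot (c+2) x
          rw [if_neg (by omega), if_neg (by omega)] at ec2
          have h1 := hcnt c (by omega)
          have h3 := hcnt (c+2) (by omega)
          have tc := htop c x
          have tc1 := htop (c+1) x
          have tc2 := htop (c+2) x
          have sb1 : rowCnt D r c x
              = (if (r,c) ∈ D then 1 else 0) + rowCnt D r (c+1) x := rowCnt_left (by omega)
          have sb2 : rowCnt D r (c+1) x
              = (if (r,c+1) ∈ D then 1 else 0) + rowCnt D r (c+2) x := rowCnt_left (by omega)
          have st1 : rowCnt D (r+1) c x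
              = (if (r+1,c) ∈ D then 1 else 0) + rowCnt D (r+1) (c+1) x := rowCnt_left (by omega)
          have st2 : rowCnt D (r+1) (c+1) x
              = (if (r+1,c+1) ∈ D then 1 else 0) + rowCnt D (r+1) (c+2) x := rowCnt_left (by omega)
          rw [if_neg hout] at sb1
          rw [if_pos hin] at sb2
          by_cases h4 : (r+1,c) ∈ D
          · have h5 := himp h4
            rw [if_pos h4] at st1
            rw [if_pos h5] at st2
            omega
          · rw [if_neg h4] at st1
            omega
        · have := hcnt k hk
          rw [if_neg (by omega), if_neg (by omega)] at e
          omega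
  · rintro ⟨hm, hcnt⟩
    refine ⟨(hmemtop x).2 hm, ?_⟩
    intro k hk
    have e := hbot k x
    have t := htop k x
    have := hcnt k hk
    by_cases hc : k ≤ c+1 ∧ c+1 ≤ x
    · by_cases hc2 : k ≤ c ∧ c ≤ x
      · rw [if_pos hc, if_pos hc2] at e
        omega
      · rw [if_pos hc, if_neg hc2] at e
        omega
    · rw [if_neg hc] at e
      by_cases hc2 : k ≤ c ∧ c ≤ x
      · exfalso
        have : x = c := by omega
        exact hx1 this
      · rw [if_neg hc2] at e
        omega

/-- ρ = r : the box `(r,c)` blocks `UV` at `c` in the moved diagram. -/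
lemma UV_R2 : ¬ UV r (insert (r,c) (D.erase (r,c+1))) c := by
  intro h
  exact UV_notbot h (Finset.mem_insert_self _ _)

/-- ρ = r : if `c+1` is unpaired after the move then `c` was unpaired before. -/
lemma UV_R3 (hin : (r,c+1) ∈ D) (hout : (r,c) ∉ D)
    (h : UV r (insert (r,c) (D.erase (r,c+1))) (c+1)) : UV r D c := by
  have hbot := rowCnt_rowmove_eq (D := D) (i := r) (a := c) (b := c+1) hin hout
  have htop := rowCnt_rowmove_ne (D := D) (i := r) (i' := r+1) (a := c) (b := c+1) (by omega)
  have hmemtop : ∀ y, ((r+1,y) ∈ insert ((r:ℕ),c) (D.erase (r,c+1))) ↔ (r+1,y) ∈ D :=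
    fun y => mem_rowmove_ne (by omega)
  obtain ⟨hm, hcnt⟩ := h
  have hmD : (r+1,c+1) ∈ D := (hmemtop _).1 hm
  have key : ∀ k, k ≤ c → rowCnt D r k c < rowCnt D (r+1) k c := by
    intro k hk
    have e := hbot k (c+1)
    rw [if_pos (by omega), if_pos (by omega)] at e
    have t := htop k (c+1)
    have hc := hcnt k (by omega)
    have sb : rowCnt D r k (c+1) = rowCnt D r k c + (if (r,c+1) ∈ D then 1 else 0) :=
      rowCnt_right (by omega)
    have st : rowCnt D (r+1) k (c+1)
        = rowCnt D (r+1) k c + (if (r+1,c+1) ∈ D then 1 else 0) := rowCnt_right (by omega)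
    rw [if_pos hin] at sb
    rw [if_pos hmD] at st
    omega
  have hmem : (r+1,c) ∈ D := by
    have := key c le_rfl
    rw [rowCnt_single', rowCnt_single', if_neg hout] at this
    split at this <;> [assumption; omega]
  exact ⟨hmem, key⟩

/-- ρ = r : if `c` was unpaired before the move then `c+1` is unpaired after. -/
lemma UV_R4 (hin : (r,c+1) ∈ D) (hout : (r,c) ∉ D)
    (himp : (r+1,c) ∈ D → (r+1,c+1) ∈ D) (h : UV r D c) :
    UV r (insert (r,c) (D.erase (r,c+1))) (c+1) := by
  have hbot := rowCnt_rowmove_eq (D := D) (i := r) (a := c) (b := c+1) hin hout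
  have htop := rowCnt_rowmove_ne (D := D) (i := r) (i' := r+1) (a := c) (b := c+1) (by omega)
  have hmemtop : ∀ y, ((r+1,y) ∈ insert ((r:ℕ),c) (D.erase (r,c+1))) ↔ (r+1,y) ∈ D :=
    fun y => mem_rowmove_ne (by omega)
  have hmD : (r+1,c+1) ∈ D := himp h.1
  refine ⟨(hmemtop _).2 hmD, ?_⟩
  intro k hk
  have t := htop k (c+1)
  rcases eq_or_lt_of_le hk with rfl | hklt
  · rw [rowCnt_single', rowCnt_single']
    have hb1 : ((r:ℕ),c+1) ∉ insert ((r:ℕ),c) (D.erase (r,c+1)) := by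
      rw [mem_rowmove_eq]
      simp
    rw [if_neg hb1, if_pos ((hmemtop (c+1)).2 hmD)]
    omega
  · have hkc : k ≤ c := by omega
    have e := hbot k (c+1)
    rw [if_pos (by omega), if_pos (by omega)] at e
    have sb : rowCnt D r k (c+1) = rowCnt D r k c + (if (r,c+1) ∈ D then 1 else 0) :=
      rowCnt_right (by omega)
    have st : rowCnt D (r+1) k (c+1)
        = rowCnt D (r+1) k c + (if (r+1,c+1) ∈ D then 1 else 0) := rowCnt_right (by omega)
    rw [if_pos hin] at sb
    rw [if_pos hmD] at st
    have := h.2 k hkc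
    omega

/-- ρ = r+1 transfer, generic columns. -/
lemma UV_S1 (hin : (r+1,c+1) ∈ D) (hout : (r+1,c) ∉ D)
    (himp : (r,c+1) ∈ D → (r,c) ∈ D) {x : ℕ} (hx1 : x ≠ c) (hx2 : x ≠ c+1) :
    UV r (insert (r+1,c) (D.erase (r+1,c+1))) x ↔ UV r D x := by
  have htop := rowCnt_rowmove_eq (D := D) (i := r+1) (a := c) (b := c+1) hin hout
  have hbot := rowCnt_rowmove_ne (D := D) (i := r+1) (i' := r) (a := c) (b := c+1) (by omega)
  have hmemtop : ∀ y, y ≠ c → y ≠ c+1 →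
      (((r+1,y) ∈ insert ((r+1:ℕ),c) (D.erase (r+1,c+1))) ↔ (r+1,y) ∈ D) := by
    intro y h1 h2
    rw [mem_rowmove_eq]
    constructor
    · rintro (rfl | ⟨hm, _⟩)
      · exact absurd rfl h1
      · exact hm
    · intro hm
      exact Or.inr ⟨hm, h2⟩
  constructor
  · rintro ⟨hm, hcnt⟩
    refine ⟨(hmemtop x hx1 hx2).1 hm, ?_⟩
    intro k hk
    have e := htop k x
    have t := hbot k x
    have := hcnt k hk
    by_cases hc : k ≤ c+1 ∧ c+1 ≤ x
    · by_cases hc2 : k ≤ c ∧ c ≤ x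
      · rw [if_pos hc, if_pos hc2] at e
        omega
      · rw [if_pos hc, if_neg hc2] at e
        omega
    · rw [if_neg hc] at e
      by_cases hc2 : k ≤ c ∧ c ≤ x
      · exfalso
        have : x = c := by omega
        exact hx1 this
      · rw [if_neg hc2] at e
        omega
  · rintro ⟨hm, hcnt⟩
    refine ⟨(hmemtop x hx1 hx2).2 hm, ?_⟩
    intro k hk
    have e := htop k x
    have t := hbot k x
    rcases lt_or_gt_of_ne hx1 with hxc | hxc
    · have := hcnt k hk
      rw [if_neg (by omega), if_neg (by omega)] at e
      omega
    · have hx2' : c+2 ≤ x := by omega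
      by_cases hkc : k ≤ c
      · have := hcnt k hk
        rw [if_pos (by omega), if_pos (by omega)] at e
        omega
      · by_cases hkc1 : k = c+1
        · subst hkc1
          have ec1 := htop (c+1) x
          rw [if_pos (by omega), if_neg (by omega)] at ec1
          have t1 := hbot (c+1) x
          by_cases h4 : (r,c+1) ∈ D
          · have h5 := himp h4
            have h1 := hcnt c (by omega)
            have sb1 : rowCnt D r c x
                = (if (r,c) ∈ D then 1 else 0) + rowCnt D r (c+1) x := rowCnt_left (by omega)
            have st1 : rowCnt D (r+1) c x
                = (if (r+1,c) ∈ D then 1 else 0) + rowCnt D (r+1) (c+1) x :=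
              rowCnt_left (by omega)
            rw [if_pos h5] at sb1
            rw [if_neg hout] at st1
            omega
          · have h3 := hcnt (c+2) (by omega)
            have sb2 : rowCnt D r (c+1) x
                = (if (r,c+1) ∈ D then 1 else 0) + rowCnt D r (c+2) x := rowCnt_left (by omega)
            have st2 : rowCnt D (r+1) (c+1) x
                = (if (r+1,c+1) ∈ D then 1 else 0) + rowCnt D (r+1) (c+2) x :=
              rowCnt_left (by omega)
            rw [if_neg h4] at sb2
            rw [if_pos hin] at st2
            omega
        · have := hcnt k hk
          rw [if_neg (by omega), if_neg (by omega)] at e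
          omega

/-- ρ = r+1 : `c+1` has no box in the moved diagram. -/
lemma UV_S2 : ¬ UV r (insert (r+1,c) (D.erase (r+1,c+1))) (c+1) := by
  intro h
  have := h.1
  rw [mem_rowmove_eq] at this
  rcases this with h' | ⟨_, h'⟩ <;> omega

/-- ρ = r+1 : if `c` is unpaired after the move then `c+1` was unpaired before. -/
lemma UV_S3 (hin : (r+1,c+1) ∈ D) (hout : (r+1,c) ∉ D)
    (himp : (r,c+1) ∈ D → (r,c) ∈ D)
    (h : UV r (insert (r+1,c) (D.erase (r+1,c+1))) c) : UV r D (c+1) := by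
  have htop := rowCnt_rowmove_eq (D := D) (i := r+1) (a := c) (b := c+1) hin hout
  have hbot := rowCnt_rowmove_ne (D := D) (i := r+1) (i' := r) (a := c) (b := c+1) (by omega)
  obtain ⟨hm, hcnt⟩ := h
  have hrc1 : (r,c+1) ∉ D := by
    intro h4
    have h5 := himp h4
    have := UV_notbot ⟨hm, hcnt⟩
    rw [mem_rowmove_ne (by omega)] at this
    exact this h5
  refine ⟨hin, ?_⟩
  intro k hk
  rcases eq_or_lt_of_le hk with rfl | hklt
  · rw [rowCnt_single', rowCnt_single', if_pos hin, if_neg hrc1]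
    omega
  · have hkc : k ≤ c := by omega
    have hc := hcnt k hkc
    have t := hbot k c
    have e := htop k c
    rw [if_neg (by omega), if_pos (by omega)] at e
    have sb : rowCnt D r k (c+1) = rowCnt D r k c + (if (r,c+1) ∈ D then 1 else 0) :=
      rowCnt_right (by omega)
    have st : rowCnt D (r+1) k (c+1)
        = rowCnt D (r+1) k c + (if (r+1,c+1) ∈ D then 1 else 0) := rowCnt_right (by omega)
    rw [if_neg hrc1] at sb
    rw [if_pos hin] at st
    omega

/-- ρ = r+1 : if `c+1` was unpaired before the move then `c` is unpaired after. -/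
lemma UV_S4 (hin : (r+1,c+1) ∈ D) (hout : (r+1,c) ∉ D)
    (h : UV r D (c+1)) : UV r (insert (r+1,c) (D.erase (r+1,c+1))) c := by
  have htop := rowCnt_rowmove_eq (D := D) (i := r+1) (a := c) (b := c+1) hin hout
  have hbot := rowCnt_rowmove_ne (D := D) (i := r+1) (i' := r) (a := c) (b := c+1) (by omega)
  have hrc1 : (r,c+1) ∉ D := UV_notbot h
  have hrc : (r,c) ∉ D := by
    intro h4
    exact hout (UV_imp h h4)
  refine ⟨by rw [mem_rowmove_eq]; exact Or.inl rfl, ?_⟩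
  intro k hk
  have hc := h.2 k (by omega)
  have t := hbot k c
  have e := htop k c
  rw [if_neg (by omega), if_pos (by omega)] at e
  have sb : rowCnt D r k (c+1) = rowCnt D r k c + (if (r,c+1) ∈ D then 1 else 0) :=
    rowCnt_right (by omega)
  have st : rowCnt D (r+1) k (c+1)
      = rowCnt D (r+1) k c + (if (r+1,c+1) ∈ D then 1 else 0) := rowCnt_right (by omega)
  rw [if_neg hrc1] at sb
  rw [if_pos hin] at st
  omega

/-- Rows `r`, `r+1` unchanged: `UV` unchanged. -/
lemma UV_congr {D' : Finset (ℕ×ℕ)} (h1 : ∀ y, ((r,y) ∈ D' ↔ (r,y) ∈ D))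
    (h2 : ∀ y, ((r+1,y) ∈ D' ↔ (r+1,y) ∈ D)) (x : ℕ) : UV r D' x ↔ UV r D x := by
  have e1 : ∀ k x', rowCnt D' r k x' = rowCnt D r k x' := by
    intro k x'
    unfold rowCnt
    exact cnt_congr h1 k x'
  have e2 : ∀ k x', rowCnt D' (r+1) k x' = rowCnt D (r+1) k x' := by
    intro k x'
    unfold rowCnt
    exact cnt_congr h2 k x'
  unfold UV
  rw [h2 x]
  constructor <;> rintro ⟨hm, hc⟩ <;> refine ⟨hm, fun k hk => ?_⟩
  · rw [← e1, ← e2]; exact hc k hk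
  · rw [e1, e2]; exact hc k hk

end RSeries
end KC

namespace KC
open Finset

section TSeries
variable {r c : ℕ} {D : Finset (ℕ×ℕ)}

lemma mem_colmove_eq {j a b y : ℕ} :
    ((y,j) ∈ insert (a,j) (D.erase (b,j))) ↔ (y = a ∨ ((y,j) ∈ D ∧ y ≠ b)) := by
  rw [mem_move]
  simp only [Prod.mk.injEq, and_true, ne_eq]

lemma mem_colmove_ne {j j' a b y : ℕ} (h : j' ≠ j) :
    ((y,j') ∈ insert (a,j) (D.erase (b,j))) ↔ (y,j') ∈ D := by
  rw [mem_move]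
  simp only [Prod.mk.injEq, ne_eq]
  constructor
  · rintro (⟨h1, h2⟩ | ⟨hm, _⟩)
    · exact absurd h2 h
    · exact hm
  · intro hm
    refine Or.inr ⟨hm, fun hh => h hh.2⟩

lemma colCnt_colmove_ne {j j' a b : ℕ} (h : j' ≠ j) (k x : ℕ) :
    colCnt (insert (a,j) (D.erase (b,j))) j' k x = colCnt D j' k x := by
  unfold colCnt
  exact cnt_congr (fun y => mem_colmove_ne h) k x

lemma colCnt_colmove_eq {j a b : ℕ} (hin : (b,j) ∈ D) (hout : (a,j) ∉ D) (k x : ℕ) :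
    colCnt (insert (a,j) (D.erase (b,j))) j k x + (if k ≤ b ∧ b ≤ x then 1 else 0)
      = colCnt D j k x + (if k ≤ a ∧ a ≤ x then 1 else 0) := by
  unfold colCnt
  exact cnt_swap (fun y => mem_colmove_eq) hin hout k x

/-- γ = c : unmatched rows at or below `r` transfer back. -/
lemma UH_T1 (hin : (r+1,c) ∈ D) (hout : (r,c) ∉ D) {p : ℕ} (hp : p ≤ r)
    (h : UH c (insert (r,c) (D.erase (r+1,c))) p) : UH c D p := by
  have hL := colCnt_colmove_eq (D := D) (j := c) (a := r) (b := r+1) hin hout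
  have hR := colCnt_colmove_ne (D := D) (j := c) (j' := c+1) (a := r) (b := r+1) (by omega)
  obtain ⟨hm, hcnt⟩ := h
  rw [mem_colmove_ne (by omega)] at hm
  refine ⟨hm, ?_⟩
  intro k hk
  have e := hL p k
  have t := hR p k
  have hc := hcnt k hk
  by_cases h1 : k < r
  · rw [if_neg (by omega), if_neg (by omega)] at e
    omega
  · by_cases h2 : k = r
    · rw [if_neg (by omega), if_pos (by omega)] at e
      omega
    · rw [if_pos (by omega), if_pos (by omega)] at e
      omega

/-- γ = c : if `r+1` is unmatched after the move then `r` was unmatched before. -/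
lemma UH_T3 (hin : (r+1,c) ∈ D) (hout : (r,c) ∉ D)
    (himp : (r+1,c+1) ∈ D → (r,c+1) ∈ D)
    (h : UH c (insert (r,c) (D.erase (r+1,c))) (r+1)) : UH c D r := by
  have hL := colCnt_colmove_eq (D := D) (j := c) (a := r) (b := r+1) hin hout
  have hR := colCnt_colmove_ne (D := D) (j := c) (j' := c+1) (a := r) (b := r+1) (by omega)
  obtain ⟨hm, hcnt⟩ := h
  rw [mem_colmove_ne (by omega)] at hm
  have hmr : (r,c+1) ∈ D := himp hm
  refine ⟨hmr, ?_⟩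
  intro k hk
  rcases eq_or_lt_of_le hk with rfl | hklt
  · rw [colCnt_single', colCnt_single', if_neg hout, if_pos hmr]
    omega
  · have hc := hcnt k (by omega)
    have e := hL (r+1) k
    rw [if_pos (by omega), if_neg (by omega)] at e
    have t := hR (r+1) k
    have sL : colCnt D c r k = (if (r,c) ∈ D then 1 else 0) + colCnt D c (r+1) k :=
      colCnt_left (by omega)
    have sR : colCnt D (c+1) r k = (if (r,c+1) ∈ D then 1 else 0) + colCnt D (c+1) (r+1) k :=
      colCnt_left (by omega)
    rw [if_neg hout] at sL
    rw [if_pos hmr] at sR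
    omega

/-- γ = c : if `r` was unmatched before the move then `r+1` is unmatched after. -/
lemma UH_T4 (hin : (r+1,c) ∈ D) (hout : (r,c) ∉ D) (h : UH c D r) :
    UH c (insert (r,c) (D.erase (r+1,c))) (r+1) := by
  have hL := colCnt_colmove_eq (D := D) (j := c) (a := r) (b := r+1) hin hout
  have hR := colCnt_colmove_ne (D := D) (j := c) (j' := c+1) (a := r) (b := r+1) (by omega)
  have hmr1 : (r+1,c+1) ∈ D := UH_imp h hin
  refine ⟨by rw [mem_colmove_ne (by omega)]; exact hmr1, ?_⟩
  intro k hk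
  have e := hL (r+1) k
  rw [if_pos (by omega), if_neg (by omega)] at e
  have t := hR (r+1) k
  have hc := h.2 k (by omega)
  have sL : colCnt D c r k = (if (r,c) ∈ D then 1 else 0) + colCnt D c (r+1) k :=
    colCnt_left (by omega)
  have sR : colCnt D (c+1) r k = (if (r,c+1) ∈ D then 1 else 0) + colCnt D (c+1) (r+1) k :=
    colCnt_left (by omega)
  rw [if_neg hout] at sL
  rw [if_pos h.1] at sR
  omega

/-- γ = c : unmatched rows strictly below `r` transfer forward. -/
lemma UH_T5 (hin : (r+1,c) ∈ D) (hout : (r,c) ∉ D)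
    (himp : (r+1,c+1) ∈ D → (r,c+1) ∈ D) {p : ℕ} (hp : p < r) (h : UH c D p) :
    UH c (insert (r,c) (D.erase (r+1,c))) p := by
  have hL := colCnt_colmove_eq (D := D) (j := c) (a := r) (b := r+1) hin hout
  have hR := colCnt_colmove_ne (D := D) (j := c) (j' := c+1) (a := r) (b := r+1) (by omega)
  refine ⟨by rw [mem_colmove_ne (by omega)]; exact h.1, ?_⟩
  intro k hk
  have e := hL p k
  have t := hR p k
  by_cases h1 : k < r
  · rw [if_neg (by omega), if_neg (by omega)] at e
    have := h.2 k hk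
    omega
  · by_cases h2 : k = r
    · rw [if_neg (by omega), if_pos (by omega)] at e
      rw [h2] at e t ⊢
      by_cases h3 : (r+1,c+1) ∈ D
      · have h4 := himp h3
        obtain ⟨r', rfl⟩ : ∃ r', r = r' + 1 := ⟨r - 1, by omega⟩
        have hc := h.2 r' (by omega)
        have sL : colCnt D c p (r'+1) = colCnt D c p r' + (if (r'+1,c) ∈ D then 1 else 0) :=
          colCnt_right (by omega)
        have sR : colCnt D (c+1) p (r'+1)
            = colCnt D (c+1) p r' + (if (r'+1,c+1) ∈ D then 1 else 0) := colCnt_right (by omega)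
        rw [if_neg hout] at sL
        rw [if_pos h4] at sR
        omega
      · have hc := h.2 (r+1) (by omega)
        have sL : colCnt D c p (r+1) = colCnt D c p r + (if (r+1,c) ∈ D then 1 else 0) :=
          colCnt_right (by omega)
        have sR : colCnt D (c+1) p (r+1)
            = colCnt D (c+1) p r + (if (r+1,c+1) ∈ D then 1 else 0) := colCnt_right (by omega)
        rw [if_pos hin] at sL
        rw [if_neg h3] at sR
        omega
    · rw [if_pos (by omega), if_pos (by omega)] at e
      have := h.2 k hk
      omega

/-- γ = c : rows at least `r+2` are untouched. -/
lemma UH_T6 (hin : (r+1,c) ∈ D) (hout : (r,c) ∉ D) {p : ℕ} (hp : r + 2 ≤ p) :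
    UH c (insert (r,c) (D.erase (r+1,c))) p ↔ UH c D p := by
  have hL := colCnt_colmove_eq (D := D) (j := c) (a := r) (b := r+1) hin hout
  have hR := colCnt_colmove_ne (D := D) (j := c) (j' := c+1) (a := r) (b := r+1) (by omega)
  have hLe : ∀ k, colCnt (insert ((r:ℕ),c) (D.erase (r+1,c))) c p k = colCnt D c p k := by
    intro k
    have e := hL p k
    rw [if_neg (by omega), if_neg (by omega)] at e
    omega
  unfold UH
  rw [mem_colmove_ne (by omega)]
  constructor <;> rintro ⟨hm, hc⟩ <;> refine ⟨hm, fun k hk => ?_⟩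
  · rw [← hLe k, ← hR p k]; exact hc k hk
  · rw [hLe k, hR p k]; exact hc k hk

/-- γ = c+1 : unmatched rows strictly below `r` transfer back. -/
lemma UH_U1 (hin : (r+1,c+1) ∈ D) (hout : (r,c+1) ∉ D)
    (himp : (r,c) ∈ D → (r+1,c) ∈ D) {p : ℕ} (hp : p < r)
    (h : UH c (insert (r,c+1) (D.erase (r+1,c+1))) p) : UH c D p := by
  have hRq := colCnt_colmove_eq (D := D) (j := c+1) (a := r) (b := r+1) hin hout
  have hLq := colCnt_colmove_ne (D := D) (j := c+1) (j' := c) (a := r) (b := r+1) (by omega)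
  obtain ⟨hm, hcnt⟩ := h
  rw [mem_colmove_eq] at hm
  have hmD : (p,c+1) ∈ D := by
    rcases hm with h' | ⟨h', _⟩
    · omega
    · exact h'
  refine ⟨hmD, ?_⟩
  intro k hk
  have e := hRq p k
  have t := hLq p k
  by_cases h1 : k < r
  · rw [if_neg (by omega), if_neg (by omega)] at e
    have := hcnt k hk
    omega
  · by_cases h2 : k = r
    · rw [h2] at e t ⊢
      by_cases h3 : (r,c) ∈ D
      · have h4 := himp h3
        have hc := hcnt (r+1) (by omega)
        have e1 := hRq p (r+1)
        rw [if_pos (by omega), if_pos (by omega)] at e1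
        have t1 := hLq p (r+1)
        have sL : colCnt D c p (r+1) = colCnt D c p r + (if (r+1,c) ∈ D then 1 else 0) :=
          colCnt_right (by omega)
        have sR : colCnt D (c+1) p (r+1)
            = colCnt D (c+1) p r + (if (r+1,c+1) ∈ D then 1 else 0) := colCnt_right (by omega)
        rw [if_pos h4] at sL
        rw [if_pos hin] at sR
        omega
      · obtain ⟨r', rfl⟩ : ∃ r', r = r' + 1 := ⟨r - 1, by omega⟩
        have hc := hcnt r' (by omega)
        have e1 := hRq p r'
        rw [if_neg (by omega), if_neg (by omega)] at e1
        have t1 := hLq p r'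
        have sL : colCnt D c p (r'+1) = colCnt D c p r' + (if (r'+1,c) ∈ D then 1 else 0) :=
          colCnt_right (by omega)
        have sR : colCnt D (c+1) p (r'+1)
            = colCnt D (c+1) p r' + (if (r'+1,c+1) ∈ D then 1 else 0) := colCnt_right (by omega)
        rw [if_neg h3] at sL
        rw [if_neg hout] at sR
        omega
    · rw [if_pos (by omega), if_pos (by omega)] at e
      have := hcnt k hk
      omega

/-- γ = c+1 : if `r` is unmatched after the move then `r+1` was unmatched before. -/
lemma UH_U2 (hin : (r+1,c+1) ∈ D) (hout : (r,c+1) ∉ D)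
    (h : UH c (insert (r,c+1) (D.erase (r+1,c+1))) r) : UH c D (r+1) := by
  have hRq := colCnt_colmove_eq (D := D) (j := c+1) (a := r) (b := r+1) hin hout
  have hLq := colCnt_colmove_ne (D := D) (j := c+1) (j' := c) (a := r) (b := r+1) (by omega)
  obtain ⟨hm, hcnt⟩ := h
  refine ⟨hin, ?_⟩
  intro k hk
  have hc := hcnt k (by omega)
  have e := hRq r k
  rw [if_pos (by omega), if_pos (by omega)] at e
  have t := hLq r k
  have sL : colCnt D c r k = (if (r,c) ∈ D then 1 else 0) + colCnt D c (r+1) k :=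
    colCnt_left (by omega)
  have sR : colCnt D (c+1) r k = (if (r,c+1) ∈ D then 1 else 0) + colCnt D (c+1) (r+1) k :=
    colCnt_left (by omega)
  rw [if_neg hout] at sR
  have hb : (if (r,c) ∈ D then 1 else 0) ≤ 1 := by split <;> omega
  omega

/-- γ = c+1 : row `r+1` has no box in column `c+1` after the move. -/
lemma UH_U3 : ¬ UH c (insert (r,c+1) (D.erase (r+1,c+1))) (r+1) := by
  intro h
  have := h.1
  rw [mem_colmove_eq] at this
  rcases this with h' | ⟨_, h'⟩ <;> omega

/-- γ = c+1 : rows at least `r+2` are untouched. -/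
lemma UH_U4 (hin : (r+1,c+1) ∈ D) (hout : (r,c+1) ∉ D) {p : ℕ} (hp : r + 2 ≤ p) :
    UH c (insert (r,c+1) (D.erase (r+1,c+1))) p ↔ UH c D p := by
  have hRq := colCnt_colmove_eq (D := D) (j := c+1) (a := r) (b := r+1) hin hout
  have hLq := colCnt_colmove_ne (D := D) (j := c+1) (j' := c) (a := r) (b := r+1) (by omega)
  have hRe : ∀ k, colCnt (insert ((r:ℕ),c+1) (D.erase (r+1,c+1))) (c+1) p k
      = colCnt D (c+1) p k := by
    intro k
    have e := hRq p k
    rw [if_neg (by omega), if_neg (by omega)] at e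
    omega
  unfold UH
  rw [mem_colmove_eq]
  have hmm : ((p = r ∨ ((p,c+1) ∈ D ∧ p ≠ r+1))) ↔ (p,c+1) ∈ D := by
    constructor
    · rintro (h' | ⟨h', _⟩)
      · omega
      · exact h'
    · intro h'
      exact Or.inr ⟨h', by omega⟩
  rw [hmm]
  constructor <;> rintro ⟨hm, hc⟩ <;> refine ⟨hm, fun k hk => ?_⟩
  · rw [← hRe k, ← hLq p k]; exact hc k hk
  · rw [hRe k, hLq p k]; exact hc k hk

/-- γ = c+1 : unmatched rows strictly below `r` transfer forward. -/
lemma UH_U5 (hin : (r+1,c+1) ∈ D) (hout : (r,c+1) ∉ D) {p : ℕ} (hp : p < r)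
    (h : UH c D p) : UH c (insert (r,c+1) (D.erase (r+1,c+1))) p := by
  have hRq := colCnt_colmove_eq (D := D) (j := c+1) (a := r) (b := r+1) hin hout
  have hLq := colCnt_colmove_ne (D := D) (j := c+1) (j' := c) (a := r) (b := r+1) (by omega)
  refine ⟨by rw [mem_colmove_eq]; exact Or.inr ⟨h.1, by omega⟩, ?_⟩
  intro k hk
  have e := hRq p k
  have t := hLq p k
  have := h.2 k hk
  by_cases h1 : k < r
  · rw [if_neg (by omega), if_neg (by omega)] at e
    omega
  · by_cases h2 : k = r
    · rw [if_neg (by omega), if_pos (by omega)] at e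
      omega
    · rw [if_pos (by omega), if_pos (by omega)] at e
      omega

/-- γ = c+1 : if `r+1` was unmatched before the move then `r` is unmatched after. -/
lemma UH_U6 (hin : (r+1,c+1) ∈ D) (hout : (r,c+1) ∉ D) (hout2 : (r,c) ∉ D)
    (h : UH c D (r+1)) : UH c (insert (r,c+1) (D.erase (r+1,c+1))) r := by
  have hRq := colCnt_colmove_eq (D := D) (j := c+1) (a := r) (b := r+1) hin hout
  have hLq := colCnt_colmove_ne (D := D) (j := c+1) (j' := c) (a := r) (b := r+1) (by omega)
  refine ⟨by rw [mem_colmove_eq]; exact Or.inl rfl, ?_⟩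
  intro k hk
  rcases eq_or_lt_of_le hk with rfl | hklt
  · have hnl : ((r:ℕ),c) ∉ insert ((r:ℕ),c+1) (D.erase (r+1,c+1)) := by
      rw [mem_colmove_ne (by omega)]
      exact hout2
    have hir : ((r:ℕ),c+1) ∈ insert ((r:ℕ),c+1) (D.erase (r+1,c+1)) := by
      rw [mem_colmove_eq]
      exact Or.inl rfl
    rw [colCnt_single', colCnt_single', if_neg hnl, if_pos hir]
    omega
  · have hc := h.2 k (by omega)
    have e := hRq r k
    rw [if_pos (by omega), if_pos (by omega)] at e
    have t := hLq r k
    have sL : colCnt D c r k = (if (r,c) ∈ D then 1 else 0) + colCnt D c (r+1) k :=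
      colCnt_left (by omega)
    have sR : colCnt D (c+1) r k = (if (r,c+1) ∈ D then 1 else 0) + colCnt D (c+1) (r+1) k :=
      colCnt_left (by omega)
    rw [if_neg hout2] at sL
    rw [if_neg hout] at sR
    omega

/-- Columns `c`, `c+1` unchanged: `UH` unchanged. -/
lemma UH_congr {D' : Finset (ℕ×ℕ)} (h1 : ∀ y, ((y,c) ∈ D' ↔ (y,c) ∈ D))
    (h2 : ∀ y, ((y,c+1) ∈ D' ↔ (y,c+1) ∈ D)) (p : ℕ) : UH c D' p ↔ UH c D p := by
  have e1 : ∀ k x', colCnt D' c k x' = colCnt D c k x' := by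
    intro k x'
    unfold colCnt
    exact cnt_congr h1 k x'
  have e2 : ∀ k x', colCnt D' (c+1) k x' = colCnt D (c+1) k x' := by
    intro k x'
    unfold colCnt
    exact cnt_congr h2 k x'
  unfold UH
  rw [h2 p]
  constructor <;> rintro ⟨hm, hc⟩ <;> refine ⟨hm, fun k hk => ?_⟩
  · rw [← e1, ← e2]; exact hc k hk
  · rw [e1, e2]; exact hc k hk

end TSeries
end KC

namespace KC
open Finset

lemma move_comm {D : Finset (ℕ×ℕ)} {a b a' b' : ℕ×ℕ} (h1 : a ≠ b') (h2 : a' ≠ b) :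
    insert a' ((insert a (D.erase b)).erase b') = insert a ((insert a' (D.erase b')).erase b) := by
  ext p
  simp only [mem_move]
  constructor
  · rintro (rfl | ⟨(rfl | ⟨hm, hb⟩), hb'⟩)
    · exact Or.inr ⟨Or.inl rfl, h2⟩
    · exact Or.inl rfl
    · exact Or.inr ⟨Or.inr ⟨hm, hb'⟩, hb⟩
  · rintro (rfl | ⟨(rfl | ⟨hm, hb'⟩), hb⟩)
    · exact Or.inr ⟨Or.inl rfl, h1⟩
    · exact Or.inl rfl
    · exact Or.inr ⟨Or.inr ⟨hm, hb⟩, hb'⟩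

lemma move_diag1 {D : Finset (ℕ×ℕ)} {r c : ℕ} (h1 : (r,c+1) ∈ D) (h2 : (r+1,c) ∈ D) :
    insert (r,c+1) ((insert (r,c) (D.erase (r,c+1))).erase (r+1,c+1))
      = insert (r+1,c) ((insert (r,c) (D.erase (r+1,c))).erase (r+1,c+1)) := by
  ext p
  simp only [mem_move]
  constructor
  · rintro (rfl | ⟨(rfl | ⟨hm, hne⟩), hne2⟩)
    · refine Or.inr ⟨Or.inr ⟨h1, ?_⟩, ?_⟩ <;> · simp only [ne_eq, Prod.mk.injEq]; omega
    · exact Or.inr ⟨Or.inl rfl, hne2⟩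
    · by_cases hp : p = (r+1,c)
      · exact Or.inl hp
      · exact Or.inr ⟨Or.inr ⟨hm, hp⟩, hne2⟩
  · rintro (rfl | ⟨(rfl | ⟨hm, hne⟩), hne2⟩)
    · refine Or.inr ⟨Or.inr ⟨h2, ?_⟩, ?_⟩ <;> · simp only [ne_eq, Prod.mk.injEq]; omega
    · exact Or.inr ⟨Or.inl rfl, hne2⟩
    · by_cases hp : p = (r,c+1)
      · exact Or.inl hp
      · exact Or.inr ⟨Or.inr ⟨hm, hp⟩, hne2⟩

lemma move_diag2 {D : Finset (ℕ×ℕ)} {r c : ℕ} (h1 : (r+1,c) ∉ D) (h2 : (r,c+1) ∉ D) :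
    insert (r,c) ((insert (r+1,c) (D.erase (r+1,c+1))).erase (r+1,c))
      = insert (r,c) ((insert (r,c+1) (D.erase (r+1,c+1))).erase (r,c+1)) := by
  rw [Finset.erase_insert (fun hm => h1 (Finset.mem_of_mem_erase hm)),
    Finset.erase_insert (fun hm => h2 (Finset.mem_of_mem_erase hm))]

end KC

open KC


/-- Rectification operators commute with raising operators on diagrams:
whenever `𝚎̄_c(D) ≠ 0`, `e_r(D) ≠ 0` iff `e_r(𝚎̄_c(D)) ≠ 0`; whenever
`e_r(D) ≠ 0`, `𝚎̄_c(D) ≠ 0` iff `𝚎̄_c(e_r(D)) ≠ 0`; and when both are nonzero,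
`𝚎̄_c(e_r(D)) = e_r(𝚎̄_c(D))`. -/
theorem rect_raise_commute (c r : ℕ) (hc : 1 ≤ c) (hr : 1 ≤ r)
    (D : Finset (ℕ × ℕ)) :
    (∀ D₁, RectRel c D D₁ → ((∃ E, RaiseRel r D E) ↔ ∃ E, RaiseRel r D₁ E)) ∧
    (∀ D₂, RaiseRel r D D₂ → ((∃ E, RectRel c D E) ↔ ∃ E, RectRel c D₂ E)) ∧
    (∀ D₁ D₂ E₁ E₂, RectRel c D D₁ → RaiseRel r D D₂ →
      RaiseRel r D₁ E₁ → RectRel c D₂ E₂ → E₁ = E₂) := by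
  refine ⟨?_, ?_, ?_⟩
  · -- Part 1
    intro D₁ hD₁
    rw [raiseRel_exists_iff, raiseRel_exists_iff]
    obtain ⟨ρ, hUH, hmin, rfl⟩ := rectRel_iff.1 hD₁
    have hρin := hUH.1
    have hρout := UH_notleft hUH
    by_cases hρr : ρ = r
    · subst hρr
      have himp : (ρ+1,c) ∈ D → (ρ+1,c+1) ∈ D := UH_imp hUH
      constructor
      · rintro ⟨x, hx⟩
        by_cases hxc : x = c
        · exact ⟨c+1, UV_R4 hρin hρout himp (hxc ▸ hx)⟩
        · by_cases hxc1 : x = c+1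
          · exact absurd hρin (hxc1 ▸ (UV_notbot hx))
          · exact ⟨x, (UV_R1 hρin hρout himp hxc hxc1).2 hx⟩
      · rintro ⟨x, hx⟩
        by_cases hxc : x = c
        · exact absurd (hxc ▸ hx) UV_R2
        · by_cases hxc1 : x = c+1
          · exact ⟨c, UV_R3 hρin hρout (hxc1 ▸ hx)⟩
          · exact ⟨x, (UV_R1 hρin hρout himp hxc hxc1).1 hx⟩
    · by_cases hρr1 : ρ = r+1
      · subst hρr1
        have himp2 : (r,c+1) ∈ D → (r,c) ∈ D := by
          intro h4
          by_contra h5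
          have := hmin r (UH_down h4 h5 hUH)
          omega
        constructor
        · rintro ⟨x, hx⟩
          by_cases hxc : x = c
          · exact absurd (hxc ▸ hx.1) hρout
          · by_cases hxc1 : x = c+1
            · exact ⟨c, UV_S4 hρin hρout (hxc1 ▸ hx)⟩
            · exact ⟨x, (UV_S1 hρin hρout himp2 hxc hxc1).2 hx⟩
        · rintro ⟨x, hx⟩
          by_cases hxc : x = c
          · exact ⟨c+1, UV_S3 hρin hρout himp2 (hxc ▸ hx)⟩
          · by_cases hxc1 : x = c+1
            · exact absurd (hxc1 ▸ hx) UV_S2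
            · exact ⟨x, (UV_S1 hρin hρout himp2 hxc hxc1).1 hx⟩
      · have h1 : ∀ y, ((r,y) ∈ insert (ρ,c) (D.erase (ρ,c+1))) ↔ (r,y) ∈ D :=
          fun y => mem_rowmove_ne (fun he => hρr he.symm)
        have h2 : ∀ y, ((r+1,y) ∈ insert (ρ,c) (D.erase (ρ,c+1))) ↔ (r+1,y) ∈ D :=
          fun y => mem_rowmove_ne (fun he => hρr1 he.symm)
        exact exists_congr (fun x => (UV_congr h1 h2 x).symm)
  · -- Part 2
    intro D₂ hD₂
    rw [rectRel_exists_iff, rectRel_exists_iff]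
    obtain ⟨γ, hUV, hmax, rfl⟩ := raiseRel_iff.1 hD₂
    have hγin := hUV.1
    have hγout := UV_notbot hUV
    by_cases hγc : γ = c
    · subst hγc
      have himp3 : (r+1,γ+1) ∈ D → (r,γ+1) ∈ D := by
        intro h4
        by_contra h5
        have := hmax (γ+1) (UV_up h4 h5 hUV)
        omega
      constructor
      · rintro ⟨p, hp⟩
        by_cases hp1 : p < r
        · exact ⟨p, UH_T5 hγin hγout himp3 hp1 hp⟩
        · by_cases hp2 : p = r
          · exact ⟨r+1, UH_T4 hγin hγout (hp2 ▸ hp)⟩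
          · by_cases hp3 : p = r+1
            · exact absurd hγin (hp3 ▸ (UH_notleft hp))
            · exact ⟨p, (UH_T6 hγin hγout (by omega)).2 hp⟩
      · rintro ⟨p, hp⟩
        by_cases hp1 : p ≤ r
        · exact ⟨p, UH_T1 hγin hγout hp1 hp⟩
        · by_cases hp3 : p = r+1
          · exact ⟨r, UH_T3 hγin hγout himp3 (hp3 ▸ hp)⟩
          · exact ⟨p, (UH_T6 hγin hγout (by omega)).1 hp⟩
    · by_cases hγc1 : γ = c+1
      · subst hγc1
        have himp4 : (r,c) ∈ D → (r+1,c) ∈ D := UV_imp hUV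
        constructor
        · rintro ⟨p, hp⟩
          by_cases hp1 : p < r
          · exact ⟨p, UH_U5 hγin hγout hp1 hp⟩
          · by_cases hp2 : p = r
            · exact absurd (hp2 ▸ hp.1) hγout
            · by_cases hp3 : p = r+1
              · have hrc : (r,c) ∉ D := fun h => (hp3 ▸ (UH_notleft hp)) (himp4 h)
                exact ⟨r, UH_U6 hγin hγout hrc (hp3 ▸ hp)⟩
              · exact ⟨p, (UH_U4 hγin hγout (by omega)).2 hp⟩
        · rintro ⟨p, hp⟩
          by_cases hp1 : p < r
          · exact ⟨p, UH_U1 hγin hγout himp4 hp1 hp⟩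
          · by_cases hp2 : p = r
            · exact ⟨r+1, UH_U2 hγin hγout (hp2 ▸ hp)⟩
            · by_cases hp3 : p = r+1
              · exact absurd (hp3 ▸ hp) UH_U3
              · exact ⟨p, (UH_U4 hγin hγout (by omega)).1 hp⟩
      · have h1 : ∀ y, ((y,c) ∈ insert (r,γ) (D.erase (r+1,γ))) ↔ (y,c) ∈ D :=
          fun y => mem_colmove_ne (fun he => hγc he.symm)
        have h2 : ∀ y, ((y,c+1) ∈ insert (r,γ) (D.erase (r+1,γ))) ↔ (y,c+1) ∈ D :=
          fun y => mem_colmove_ne (fun he => hγc1 he.symm)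
        exact exists_congr (fun p => (UH_congr h1 h2 p).symm)
  · -- Part 3
    intro D₁ D₂ E₁ E₂ hRect hRaise hR1 hR2
    obtain ⟨ρ, hUH, hmin, rfl⟩ := rectRel_iff.1 hRect
    obtain ⟨γ, hUV, hmax, rfl⟩ := raiseRel_iff.1 hRaise
    obtain ⟨γ₁, hUV₁, hmax₁, hE₁⟩ := raiseRel_iff.1 hR1
    obtain ⟨ρ₂, hUH₂, hmin₂, hE₂⟩ := rectRel_iff.1 hR2
    have hρin := hUH.1
    have hρout := UH_notleft hUH
    have hγin := hUV.1
    have hγout := UV_notbot hUV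
    by_cases hρr : ρ = r
    · subst hρr
      have himp : (ρ+1,c) ∈ D → (ρ+1,c+1) ∈ D := UH_imp hUH
      by_cases hγc : γ = c
      · -- Case ρ = r, γ = c
        subst hγc
        have h3 : (ρ+1,γ+1) ∈ D := himp hγin
        have hγ1 : γ₁ = γ+1 := by
          refine le_antisymm ?_ (hmax₁ _ (UV_R4 hρin hρout himp hUV))
          by_cases h : γ₁ = γ
          · omega
          · by_cases h' : γ₁ = γ+1
            · omega
            · have := hmax γ₁ ((UV_R1 hρin hρout himp h h').1 hUV₁)
              omega
        have hρ2 : ρ₂ = ρ+1 := by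
          refine le_antisymm (hmin₂ _ (UH_T4 hγin hγout hUH)) ?_
          by_contra hcon
          push_neg at hcon
          have hple : ρ₂ ≤ ρ := by omega
          have hpD := UH_T1 hγin hγout hple hUH₂
          have := hmin ρ₂ hpD
          have hpr : ρ₂ = ρ := by omega
          rw [hpr] at hUH₂
          exact (UH_notleft hUH₂) (Finset.mem_insert_self _ _)
        rw [hE₁, hE₂, hγ1, hρ2]
        exact move_diag1 hρin hγin
      · by_cases hγc1 : γ = c+1
        · -- impossible : ρ = r ∧ γ = c+1
          exact absurd hρin (hγc1 ▸ hγout)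
        · -- Case ρ = r, γ generic
          have hγ1 : γ₁ = γ := by
            refine le_antisymm ?_ (hmax₁ _ ((UV_R1 hρin hρout himp hγc hγc1).2 hUV))
            by_cases h : γ₁ = c
            · exact absurd (h ▸ hUV₁) UV_R2
            · by_cases h' : γ₁ = c+1
              · have := hmax c (UV_R3 hρin hρout (h' ▸ hUV₁))
                omega
              · exact hmax γ₁ ((UV_R1 hρin hρout himp h h').1 hUV₁)
          have hc1 : ∀ y, ((y,c) ∈ insert (ρ,γ) (D.erase (ρ+1,γ))) ↔ (y,c) ∈ D :=
            fun y => mem_colmove_ne (fun he => hγc he.symm)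
          have hc2 : ∀ y, ((y,c+1) ∈ insert (ρ,γ) (D.erase (ρ+1,γ))) ↔ (y,c+1) ∈ D :=
            fun y => mem_colmove_ne (fun he => hγc1 he.symm)
          have hρ2 : ρ₂ = ρ := by
            refine le_antisymm (hmin₂ _ ((UH_congr hc1 hc2 ρ).2 hUH)) ?_
            exact hmin ρ₂ ((UH_congr hc1 hc2 ρ₂).1 hUH₂)
          rw [hE₁, hE₂, hγ1, hρ2]
          exact move_comm (by simp only [ne_eq, Prod.mk.injEq]; omega)
            (by simp only [ne_eq, Prod.mk.injEq]; omega)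
    · by_cases hρr1 : ρ = r+1
      · subst hρr1
        have himp2 : (r,c+1) ∈ D → (r,c) ∈ D := by
          intro h4
          by_contra h5
          have := hmin r (UH_down h4 h5 hUH)
          omega
        by_cases hγc : γ = c
        · -- impossible : ρ = r+1 ∧ γ = c
          exact absurd (hγc ▸ hγin) hρout
        · by_cases hγc1 : γ = c+1
          · -- Case ρ = r+1, γ = c+1
            subst hγc1
            have hrc : (r,c) ∉ D := fun h => hρout (UV_imp hUV h)
            have hγ1 : γ₁ = c := by
              refine le_antisymm ?_ (hmax₁ _ (UV_S4 hρin hρout hUV))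
              by_cases h : γ₁ = c+1
              · exact absurd (h ▸ hUV₁) UV_S2
              · by_cases h' : γ₁ = c
                · omega
                · have := hmax γ₁ ((UV_S1 hρin hρout himp2 h' h).1 hUV₁)
                  omega
            have hρ2 : ρ₂ = r := by
              refine le_antisymm (hmin₂ _ (UH_U6 hγin hγout hrc hUH)) ?_
              by_contra hcon
              push_neg at hcon
              have himp4 : (r,c) ∈ D → (r+1,c) ∈ D := UV_imp hUV
              have := hmin ρ₂ (UH_U1 hγin hγout himp4 hcon hUH₂)
              omega
            rw [hE₁, hE₂, hγ1, hρ2]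
            exact move_diag2 hρout hγout
          · -- Case ρ = r+1, γ generic
            have hγ1 : γ₁ = γ := by
              refine le_antisymm ?_ (hmax₁ _ ((UV_S1 hρin hρout himp2 hγc hγc1).2 hUV))
              by_cases h : γ₁ = c
              · have := hmax (c+1) (UV_S3 hρin hρout himp2 (h ▸ hUV₁))
                omega
              · by_cases h' : γ₁ = c+1
                · exact absurd (h' ▸ hUV₁) UV_S2
                · exact hmax γ₁ ((UV_S1 hρin hρout himp2 h h').1 hUV₁)
            have hc1 : ∀ y, ((y,c) ∈ insert (r,γ) (D.erase (r+1,γ))) ↔ (y,c) ∈ D :=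
              fun y => mem_colmove_ne (fun he => hγc he.symm)
            have hc2 : ∀ y, ((y,c+1) ∈ insert (r,γ) (D.erase (r+1,γ))) ↔ (y,c+1) ∈ D :=
              fun y => mem_colmove_ne (fun he => hγc1 he.symm)
            have hρ2 : ρ₂ = r+1 := by
              refine le_antisymm (hmin₂ _ ((UH_congr hc1 hc2 (r+1)).2 hUH)) ?_
              exact hmin ρ₂ ((UH_congr hc1 hc2 ρ₂).1 hUH₂)
            rw [hE₁, hE₂, hγ1, hρ2]
            exact move_comm (by simp only [ne_eq, Prod.mk.injEq]; omega)
              (by simp only [ne_eq, Prod.mk.injEq]; omega)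
      · -- ρ generic
        have hr1 : ∀ y, ((r,y) ∈ insert (ρ,c) (D.erase (ρ,c+1))) ↔ (r,y) ∈ D :=
          fun y => mem_rowmove_ne (fun he => hρr he.symm)
        have hr2 : ∀ y, ((r+1,y) ∈ insert (ρ,c) (D.erase (ρ,c+1))) ↔ (r+1,y) ∈ D :=
          fun y => mem_rowmove_ne (fun he => hρr1 he.symm)
        have hγ1 : γ₁ = γ := by
          refine le_antisymm (hmax γ₁ ((UV_congr hr1 hr2 γ₁).1 hUV₁))
            (hmax₁ γ ((UV_congr hr1 hr2 γ).2 hUV))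
        by_cases hγc : γ = c
        · -- Case ρ generic, γ = c
          subst hγc
          have himp3 : (r+1,γ+1) ∈ D → (r,γ+1) ∈ D := by
            intro h4
            by_contra h5
            have := hmax (γ+1) (UV_up h4 h5 hUV)
            omega
          have hρ2 : ρ₂ = ρ := by
            refine le_antisymm ?_ ?_
            · refine hmin₂ _ ?_
              by_cases h : ρ < r
              · exact UH_T5 hγin hγout himp3 h hUH
              · exact (UH_T6 hγin hγout (by omega)).2 hUH
            · by_cases h : ρ₂ ≤ r
              · exact hmin ρ₂ (UH_T1 hγin hγout h hUH₂)
              · by_cases h' : ρ₂ = r+1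
                · have := hmin r (UH_T3 hγin hγout himp3 (h' ▸ hUH₂))
                  omega
                · exact hmin ρ₂ ((UH_T6 hγin hγout (by omega)).1 hUH₂)
          rw [hE₁, hE₂, hγ1, hρ2]
          exact move_comm (by simp only [ne_eq, Prod.mk.injEq]; omega)
            (by simp only [ne_eq, Prod.mk.injEq]; omega)
        · by_cases hγc1 : γ = c+1
          · -- Case ρ generic, γ = c+1
            subst hγc1
            have himp4 : (r,c) ∈ D → (r+1,c) ∈ D := UV_imp hUV
            have hρ2 : ρ₂ = ρ := by
              refine le_antisymm ?_ ?_
              · refine hmin₂ _ ?_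
                by_cases h : ρ < r
                · exact UH_U5 hγin hγout h hUH
                · exact (UH_U4 hγin hγout (by omega)).2 hUH
              · by_cases h : ρ₂ < r
                · exact hmin ρ₂ (UH_U1 hγin hγout himp4 h hUH₂)
                · by_cases h' : ρ₂ = r
                  · have := hmin (r+1) (UH_U2 hγin hγout (h' ▸ hUH₂))
                    omega
                  · by_cases h'' : ρ₂ = r+1
                    · exact absurd (h'' ▸ hUH₂) UH_U3
                    · exact hmin ρ₂ ((UH_U4 hγin hγout (by omega)).1 hUH₂)
            rw [hE₁, hE₂, hγ1, hρ2]
            exact move_comm (by simp only [ne_eq, Prod.mk.injEq]; omega)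
              (by simp only [ne_eq, Prod.mk.injEq]; omega)
          · -- Case ρ generic, γ generic
            have hc1 : ∀ y, ((y,c) ∈ insert (r,γ) (D.erase (r+1,γ))) ↔ (y,c) ∈ D :=
              fun y => mem_colmove_ne (fun he => hγc he.symm)
            have hc2 : ∀ y, ((y,c+1) ∈ insert (r,γ) (D.erase (r+1,γ))) ↔ (y,c+1) ∈ D :=
              fun y => mem_colmove_ne (fun he => hγc1 he.symm)
            have hρ2 : ρ₂ = ρ := by
              refine le_antisymm (hmin₂ _ ((UH_congr hc1 hc2 ρ).2 hUH))
                (hmin ρ₂ ((UH_congr hc1 hc2 ρ₂).1 hUH₂))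
            rw [hE₁, hE₂, hγ1, hρ2]
            exact move_comm (by simp only [ne_eq, Prod.mk.injEq]; omega)
              (by simp only [ne_eq, Prod.mk.injEq]; omega)
end

section
/- The rectification operator 𝚎̄_c admits the following equivalent description: define M^c(D,r) = #{(s,c+1) ∈ D : s ≥ r} − #{(s,c) ∈ D : s ≥ r} and M^c(D) = max_r M^c(D,r). If M^c(D) ≤ 0 then 𝚎̄_c(D) = 0; otherwise letting r be the largest row index with M^c(D,r) = M^c(D), 𝚎̄_c(D) pushes the cell at (r, c+1) left to (r, c). This agrees with the definition of 𝚎̄_c via horizontal c-pairing: the largest row index achieving the maximum of M^c(D,·) equals the row of the lowest horizontally unpaired box in column c+1. -/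
open scoped Classical

/-- `M^c(D, r) = #{(s, c+1) ∈ D : s ≥ r} − #{(s, c) ∈ D : s ≥ r}`. -/
def Mfun (c : ℕ) (D : Finset (ℕ × ℕ)) (r : ℕ) : ℤ :=
  ((D.filter (fun p => p.2 = c + 1 ∧ r ≤ p.1)).card : ℤ) -
    ((D.filter (fun p => p.2 = c ∧ r ≤ p.1)).card : ℤ)

/-- The `M`-based description of the rectification operator: push the cell of
column `c+1` at the largest row `r₀` where `M^c(D, ·)` attains its (positive)
maximum, left to column `c`. -/
def MRectRel (c : ℕ) (D D' : Finset (ℕ × ℕ)) : Prop :=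
  ∃ r₀, 0 < Mfun c D r₀ ∧ (∀ r, Mfun c D r ≤ Mfun c D r₀) ∧
    (∀ r, r₀ < r → Mfun c D r < Mfun c D r₀) ∧
    (r₀, c + 1) ∈ D ∧ D' = insert (r₀, c) (D.erase (r₀, c + 1))

namespace RectAux

open Finset

lemma mem_matched_fst {M : Finset ((ℕ × ℕ) × (ℕ × ℕ))} {q} (h : q ∈ M) :
    q.1 ∈ matchedBoxes M := by
  exact Finset.mem_union_left _ (Finset.mem_image_of_mem _ h)

lemma mem_matched_snd {M : Finset ((ℕ × ℕ) × (ℕ × ℕ))} {q} (h : q ∈ M) :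
    q.2 ∈ matchedBoxes M := by
  exact Finset.mem_union_right _ (Finset.mem_image_of_mem _ h)

lemma matched_mono {M M' : Finset ((ℕ × ℕ) × (ℕ × ℕ))} (h : M ⊆ M') :
    matchedBoxes M ⊆ matchedBoxes M' := by
  unfold matchedBoxes
  exact Finset.union_subset_union (Finset.image_subset_image h)
    (Finset.image_subset_image h)

lemma mem_matched_iff {M : Finset ((ℕ × ℕ) × (ℕ × ℕ))} {x} :
    x ∈ matchedBoxes M ↔ (∃ q ∈ M, q.1 = x) ∨ (∃ q ∈ M, q.2 = x) := by
  simp [matchedBoxes]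

/-- Invariant maintained along the horizontal pairing process. -/
structure Inv (c : ℕ) (D : Finset (ℕ × ℕ)) (M : Finset ((ℕ × ℕ) × (ℕ × ℕ))) : Prop where
  init : hInit c D ⊆ M
  mem1 : ∀ q ∈ M, q.1 ∈ D
  mem2 : ∀ q ∈ M, q.2 ∈ D
  col1 : ∀ q ∈ M, q.1.2 = c + 1
  col2 : ∀ q ∈ M, q.2.2 = c
  mono : ∀ q ∈ M, q.1.1 ≤ q.2.1
  interior : ∀ q ∈ M, ∀ p ∈ D, (p.2 = c ∨ p.2 = c + 1) → q.1.1 < p.1 → p.1 < q.2.1 →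
      p ∈ matchedBoxes M
  injf : ∀ q ∈ M, ∀ q' ∈ M, q.1 = q'.1 → q = q'
  injs : ∀ q ∈ M, ∀ q' ∈ M, q.2 = q'.2 → q = q'

lemma mem_hInit {c : ℕ} {D : Finset (ℕ × ℕ)} {q : (ℕ × ℕ) × (ℕ × ℕ)} :
    q ∈ hInit c D ↔ ∃ r, (r, c + 1) ∈ D ∧ (r, c) ∈ D ∧ q = ((r, c + 1), (r, c)) := by
  constructor
  · intro h
    simp only [hInit, Finset.mem_image, Finset.mem_filter] at h
    obtain ⟨p, ⟨hpD, hpc, hpc2⟩, rfl⟩ := h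
    refine ⟨p.1, ?_, hpc2, ?_⟩
    · rwa [← hpc, Prod.mk.eta]
    · rw [← hpc, Prod.mk.eta]
  · rintro ⟨r, h1, h2, rfl⟩
    simp only [hInit, Finset.mem_image, Finset.mem_filter]
    exact ⟨(r, c + 1), ⟨h1, rfl, h2⟩, rfl⟩

lemma inv_init (c : ℕ) (D : Finset (ℕ × ℕ)) : Inv c D (hInit c D) := by
  constructor
  all_goals
    first
    | exact Finset.Subset.refl _
    | (intro q hq
       obtain ⟨r, h1, h2, rfl⟩ := mem_hInit.1 hq
       try (intro q' hq'; obtain ⟨r', h1', h2', rfl⟩ := mem_hInit.1 hq')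
       simp_all
       try omega)

lemma inv_step {c : ℕ} {D : Finset (ℕ × ℕ)} {M M' : Finset ((ℕ × ℕ) × (ℕ × ℕ))}
    (hI : Inv c D M) (h : HStep c D M M') : Inv c D M' := by
  obtain ⟨rx, ry, hx, hy, hlt, hxu, hyu, hbet, rfl⟩ := h
  have hsub : M ⊆ insert ((rx, c + 1), (ry, c)) M := Finset.subset_insert _ _
  constructor
  · exact hI.init.trans hsub
  · intro q hq
    rcases Finset.mem_insert.1 hq with rfl | hq
    · exact hx
    · exact hI.mem1 q hq
  · intro q hq
    rcases Finset.mem_insert.1 hq with rfl | hq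
    · exact hy
    · exact hI.mem2 q hq
  · intro q hq
    rcases Finset.mem_insert.1 hq with rfl | hq
    · rfl
    · exact hI.col1 q hq
  · intro q hq
    rcases Finset.mem_insert.1 hq with rfl | hq
    · rfl
    · exact hI.col2 q hq
  · intro q hq
    rcases Finset.mem_insert.1 hq with rfl | hq
    · exact hlt.le
    · exact hI.mono q hq
  · intro q hq p hp hcol h1 h2
    rcases Finset.mem_insert.1 hq with rfl | hq
    · exact matched_mono hsub (hbet p hp hcol h1 h2)
    · exact matched_mono hsub (hI.interior q hq p hp hcol h1 h2)
  · intro q hq q' hq' he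
    rcases Finset.mem_insert.1 hq with rfl | hq <;>
      rcases Finset.mem_insert.1 hq' with rfl | hq'
    · rfl
    · have := mem_matched_fst hq'; rw [← he] at this; exact absurd this hxu
    · have := mem_matched_fst hq; rw [he] at this; exact absurd this hxu
    · exact hI.injf q hq q' hq' he
  · intro q hq q' hq' he
    rcases Finset.mem_insert.1 hq with rfl | hq <;>
      rcases Finset.mem_insert.1 hq' with rfl | hq'
    · rfl
    · have := mem_matched_snd hq'; rw [← he] at this; exact absurd this hyu
    · have := mem_matched_snd hq; rw [he] at this; exact absurd this hyu
    · exact hI.injs q hq q' hq' he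

lemma inv_reach {c : ℕ} {D : Finset (ℕ × ℕ)} {M : Finset ((ℕ × ℕ) × (ℕ × ℕ))}
    (h : Relation.ReflTransGen (HStep c D) (hInit c D) M) : Inv c D M := by
  induction h with
  | refl => exact inv_init c D
  | tail _ hstep ih => exact inv_step ih hstep

lemma same_row_matched {c : ℕ} {D : Finset (ℕ × ℕ)} {M : Finset ((ℕ × ℕ) × (ℕ × ℕ))}
    (hI : Inv c D M) {r : ℕ} (h1 : (r, c) ∈ D) (h2 : (r, c + 1) ∈ D) :
    (r, c + 1) ∈ matchedBoxes M ∧ (r, c) ∈ matchedBoxes M := by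
  have hq : ((r, c + 1), (r, c)) ∈ M := hI.init (mem_hInit.2 ⟨r, h2, h1, rfl⟩)
  exact ⟨mem_matched_fst hq, mem_matched_snd hq⟩

lemma no_straddle {c : ℕ} {D : Finset (ℕ × ℕ)} {M : Finset ((ℕ × ℕ) × (ℕ × ℕ))}
    (hI : Inv c D M) {r : ℕ} (hr : (r, c + 1) ∈ D) (hru : (r, c + 1) ∉ matchedBoxes M)
    {q} (hq : q ∈ M) : ¬ (q.1.1 < r ∧ r ≤ q.2.1) := by
  rintro ⟨h1, h2⟩
  rcases lt_or_eq_of_le h2 with h2 | h2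
  · exact hru (hI.interior q hq (r, c + 1) hr (Or.inr rfl) h1 h2)
  · have hq2 : (r, c) ∈ D := by
      have := hI.mem2 q hq
      have hc2 := hI.col2 q hq
      rwa [show q.2 = (r, c) from Prod.ext h2.symm hc2] at this
    exact hru (same_row_matched hI hq2 hr).1

lemma unmatched_order {c : ℕ} {D : Finset (ℕ × ℕ)} {M : Finset ((ℕ × ℕ) × (ℕ × ℕ))}
    (hO : HOutcome c D M) : ∀ n rx ry, ry ≤ rx + n →
    (rx, c + 1) ∈ D → (rx, c + 1) ∉ matchedBoxes M →
    (ry, c) ∈ D → (ry, c) ∉ matchedBoxes M → ry < rx := by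
  have hI : Inv c D M := inv_reach hO.1
  intro n
  induction n with
  | zero =>
    intro rx ry hle hx hxu hy hyu
    rcases lt_or_eq_of_le hle with h | h
    · omega
    · have hE : ry = rx := by omega
      subst hE
      exact absurd (same_row_matched hI hy hx).1 hxu
  | succ n ih =>
    intro rx ry hle hx hxu hy hyu
    by_cases hle' : ry ≤ rx + n
    · exact ih rx ry hle' hx hxu hy hyu
    have hry : ry = rx + n + 1 := by omega
    by_contra hcon
    push_neg at hcon
    have hlt : rx < ry := by
      rcases lt_or_eq_of_le hcon with h | h
      · exact h
      · subst h
        exact absurd (same_row_matched hI hy hx).1 hxu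
    -- maximality: the step pairing rx with ry must fail
    have hbetn : ¬ ∀ p ∈ D, (p.2 = c ∨ p.2 = c + 1) → rx < p.1 → p.1 < ry →
        p ∈ matchedBoxes M := by
      intro hb
      exact hO.2 _ ⟨rx, ry, hx, hy, hlt, hxu, hyu, hb, rfl⟩
    push_neg at hbetn
    obtain ⟨p, hpD, hpcol, hp1, hp2, hpu⟩ := hbetn
    rcases hpcol with hpc | hpc
    · have : (p.1, c) ∈ D := by rwa [← hpc, Prod.mk.eta]
      have hpu' : (p.1, c) ∉ matchedBoxes M := by rwa [← hpc, Prod.mk.eta]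
      have := ih rx p.1 (by omega) hx hxu this hpu'
      omega
    · have : (p.1, c + 1) ∈ D := by rwa [← hpc, Prod.mk.eta]
      have hpu' : (p.1, c + 1) ∉ matchedBoxes M := by rwa [← hpc, Prod.mk.eta]
      have := ih p.1 ry (by omega) this hpu' hy hyu
      omega

end RectAux
namespace RectAux

/-- Boxes of column `c+1` in rows `≥ r`. -/
def Cset (c : ℕ) (D : Finset (ℕ × ℕ)) (r : ℕ) : Finset (ℕ × ℕ) :=
  D.filter (fun p => p.2 = c + 1 ∧ r ≤ p.1)

/-- Boxes of column `c` in rows `≥ r`. -/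
def Oset (c : ℕ) (D : Finset (ℕ × ℕ)) (r : ℕ) : Finset (ℕ × ℕ) :=
  D.filter (fun p => p.2 = c ∧ r ≤ p.1)

def MCset (c : ℕ) (D : Finset (ℕ × ℕ)) (M : Finset ((ℕ × ℕ) × (ℕ × ℕ))) (r : ℕ) :
    Finset (ℕ × ℕ) := (Cset c D r).filter (fun p => p ∈ matchedBoxes M)

def UCset (c : ℕ) (D : Finset (ℕ × ℕ)) (M : Finset ((ℕ × ℕ) × (ℕ × ℕ))) (r : ℕ) :
    Finset (ℕ × ℕ) := (Cset c D r).filter (fun p => p ∉ matchedBoxes M)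

lemma Mfun_eq (c : ℕ) (D : Finset (ℕ × ℕ)) (r : ℕ) :
    Mfun c D r = ((Cset c D r).card : ℤ) - ((Oset c D r).card : ℤ) := rfl

lemma card_split (c : ℕ) (D : Finset (ℕ × ℕ)) (M : Finset ((ℕ × ℕ) × (ℕ × ℕ))) (r : ℕ) :
    (MCset c D M r).card + (UCset c D M r).card = (Cset c D r).card :=
  Finset.card_filter_add_card_filter_not (fun p => p ∈ matchedBoxes M)

lemma claim1 {c : ℕ} {D : Finset (ℕ × ℕ)} {M : Finset ((ℕ × ℕ) × (ℕ × ℕ))}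
    (hI : Inv c D M) (r : ℕ) : (MCset c D M r).card ≤ (Oset c D r).card := by
  set Mr := M.filter (fun q => r ≤ q.1.1) with hMr
  have hMrM : Mr ⊆ M := Finset.filter_subset _ _
  have ha : MCset c D M r ⊆ Mr.image Prod.fst := by
    intro p hp
    simp only [MCset, Cset, Finset.mem_filter] at hp
    obtain ⟨⟨hpD, hpc, hpr⟩, hpm⟩ := hp
    rcases mem_matched_iff.1 hpm with ⟨q, hq, hq1⟩ | ⟨q, hq, hq2⟩
    · refine Finset.mem_image.2 ⟨q, ?_, hq1⟩
      simp only [hMr, Finset.mem_filter]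
      exact ⟨hq, by rw [hq1]; exact hpr⟩
    · have := hI.col2 q hq
      rw [hq2, hpc] at this
      omega
  have hb : (Mr.image Prod.fst).card ≤ Mr.card := Finset.card_image_le
  have hc : Mr.card = (Mr.image Prod.snd).card := by
    rw [Finset.card_image_of_injOn]
    intro q hq q' hq' h
    exact hI.injs q (hMrM hq) q' (hMrM hq') h
  have hd : Mr.image Prod.snd ⊆ Oset c D r := by
    intro p hp
    obtain ⟨q, hq, rfl⟩ := Finset.mem_image.1 hp
    have hqr : r ≤ q.1.1 := (Finset.mem_filter.1 hq).2
    have hqM : q ∈ M := hMrM hq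
    simp only [Oset, Finset.mem_filter]
    exact ⟨hI.mem2 q hqM, hI.col2 q hqM, le_trans hqr (hI.mono q hqM)⟩
  calc (MCset c D M r).card ≤ (Mr.image Prod.fst).card := Finset.card_le_card ha
    _ ≤ Mr.card := hb
    _ = (Mr.image Prod.snd).card := hc
    _ ≤ (Oset c D r).card := Finset.card_le_card hd

lemma claim2 {c : ℕ} {D : Finset (ℕ × ℕ)} {M : Finset ((ℕ × ℕ) × (ℕ × ℕ))}
    (hO : HOutcome c D M) {r₀ : ℕ} (hr : (r₀, c + 1) ∈ D)
    (hru : (r₀, c + 1) ∉ matchedBoxes M) :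
    (Oset c D r₀).card ≤ (MCset c D M r₀).card := by
  have hI : Inv c D M := inv_reach hO.1
  set Mr := M.filter (fun q => r₀ ≤ q.1.1) with hMr
  have hMrM : Mr ⊆ M := Finset.filter_subset _ _
  have ha : Oset c D r₀ ⊆ Mr.image Prod.snd := by
    intro p hp
    simp only [Oset, Finset.mem_filter] at hp
    obtain ⟨hpD, hpc, hpr⟩ := hp
    have hpm : p ∈ matchedBoxes M := by
      by_contra hpm
      have hpD' : (p.1, c) ∈ D := by rwa [← hpc, Prod.mk.eta]
      have hpm' : (p.1, c) ∉ matchedBoxes M := by rwa [← hpc, Prod.mk.eta]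
      have := unmatched_order hO p.1 r₀ p.1 (by omega) hr hru hpD' hpm'
      omega
    rcases mem_matched_iff.1 hpm with ⟨q, hq, hq1⟩ | ⟨q, hq, hq2⟩
    · have := hI.col1 q hq
      rw [hq1, hpc] at this
      omega
    · refine Finset.mem_image.2 ⟨q, ?_, hq2⟩
      simp only [hMr, Finset.mem_filter]
      refine ⟨hq, ?_⟩
      have hns := no_straddle hI hr hru hq
      have : r₀ ≤ q.2.1 := by rw [hq2]; exact hpr
      omega
  have hb : (Mr.image Prod.snd).card ≤ Mr.card := Finset.card_image_le
  have hc : Mr.card = (Mr.image Prod.fst).card := by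
    rw [Finset.card_image_of_injOn]
    intro q hq q' hq' h
    exact hI.injf q (hMrM hq) q' (hMrM hq') h
  have hd : Mr.image Prod.fst ⊆ MCset c D M r₀ := by
    intro p hp
    obtain ⟨q, hq, rfl⟩ := Finset.mem_image.1 hp
    have hqr : r₀ ≤ q.1.1 := (Finset.mem_filter.1 hq).2
    have hqM : q ∈ M := hMrM hq
    simp only [MCset, Cset, Finset.mem_filter]
    exact ⟨⟨hI.mem1 q hqM, hI.col1 q hqM, hqr⟩, mem_matched_fst hqM⟩
  calc (Oset c D r₀).card ≤ (Mr.image Prod.snd).card := Finset.card_le_card ha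
    _ ≤ Mr.card := hb
    _ = (Mr.image Prod.fst).card := hc
    _ ≤ (MCset c D M r₀).card := Finset.card_le_card hd

/-- The main counting lemma: the row of the lowest unmatched box of column
`c+1` is the largest row where `Mfun` attains its (positive) maximum. -/
lemma key {c : ℕ} {D : Finset (ℕ × ℕ)} {M : Finset ((ℕ × ℕ) × (ℕ × ℕ))}
    (hO : HOutcome c D M) (x : ℕ × ℕ) (hx : x ∈ D) (hxc : x.2 = c + 1)
    (hxu : x ∉ matchedBoxes M)
    (hlow : ∀ y ∈ D, y.2 = c + 1 → y ∉ matchedBoxes M → x.1 ≤ y.1) :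
    0 < Mfun c D x.1 ∧ (∀ r, Mfun c D r ≤ Mfun c D x.1) ∧
      (∀ r, x.1 < r → Mfun c D r < Mfun c D x.1) := by
  have hI : Inv c D M := inv_reach hO.1
  have hxD : (x.1, c + 1) ∈ D := by rwa [← hxc, Prod.mk.eta]
  have hxu' : (x.1, c + 1) ∉ matchedBoxes M := by rwa [← hxc, Prod.mk.eta]
  have hUCsub : ∀ r, UCset c D M r ⊆ UCset c D M x.1 := by
    intro r p hp
    simp only [UCset, Cset, Finset.mem_filter] at hp ⊢
    exact ⟨⟨hp.1.1, hp.1.2.1, hlow p hp.1.1 hp.1.2.1 hp.2⟩, hp.2⟩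
  have hxmem : x ∈ UCset c D M x.1 := by
    simp only [UCset, Cset, Finset.mem_filter]
    exact ⟨⟨hx, hxc, le_refl _⟩, hxu⟩
  have hpos : 1 ≤ (UCset c D M x.1).card := Finset.card_pos.2 ⟨x, hxmem⟩
  have h2 := claim2 hO hxD hxu'
  have hsx := card_split c D M x.1
  refine ⟨?_, ?_, ?_⟩
  · rw [Mfun_eq]
    omega
  · intro r
    have h1 := claim1 hI r
    have hs := card_split c D M r
    have hsub := Finset.card_le_card (hUCsub r)
    rw [Mfun_eq, Mfun_eq]
    omega
  · intro r hr
    have h1 := claim1 hI r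
    have hs := card_split c D M r
    have hsub : UCset c D M r ⊆ (UCset c D M x.1).erase x := by
      intro p hp
      refine Finset.mem_erase.2 ⟨?_, hUCsub r hp⟩
      intro h
      have : r ≤ p.1 := (Finset.mem_filter.1 (Finset.mem_filter.1 hp).1).2.2
      rw [h] at this
      omega
    have hcard := Finset.card_le_card hsub
    rw [Finset.card_erase_of_mem hxmem] at hcard
    rw [Mfun_eq, Mfun_eq]
    omega

/-- If every box of column `c+1` is matched, `Mfun` is nonpositive. -/
lemma nonpos {c : ℕ} {D : Finset (ℕ × ℕ)} {M : Finset ((ℕ × ℕ) × (ℕ × ℕ))}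
    (hI : Inv c D M) (hall : ∀ p ∈ D, p.2 = c + 1 → p ∈ matchedBoxes M) (r : ℕ) :
    Mfun c D r ≤ 0 := by
  have h1 := claim1 hI r
  have hs := card_split c D M r
  have hUC : UCset c D M r = ∅ := by
    rw [Finset.eq_empty_iff_forall_notMem]
    intro p hp
    simp only [UCset, Cset, Finset.mem_filter] at hp
    exact hp.2 (hall p hp.1.1 hp.1.2.1)
  rw [Mfun_eq]
  rw [hUC, Finset.card_empty] at hs
  omega

lemma subset_prod {c : ℕ} {D : Finset (ℕ × ℕ)} {M : Finset ((ℕ × ℕ) × (ℕ × ℕ))}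
    (hI : Inv c D M) : M ⊆ D ×ˢ D := by
  intro q hq
  exact Finset.mem_product.2 ⟨hI.mem1 q hq, hI.mem2 q hq⟩

lemma step_card {c : ℕ} {D : Finset (ℕ × ℕ)} {M M' : Finset ((ℕ × ℕ) × (ℕ × ℕ))}
    (h : HStep c D M M') : M.card < M'.card := by
  obtain ⟨rx, ry, hx, hy, hlt, hxu, hyu, hb, rfl⟩ := h
  have hnm : ((rx, c + 1), (ry, c)) ∉ M := fun hmem => hxu (mem_matched_fst hmem)
  rw [Finset.card_insert_of_notMem hnm]
  omega

lemma exists_outcome (c : ℕ) (D : Finset (ℕ × ℕ)) : ∃ M, HOutcome c D M := by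
  suffices H : ∀ k M, Relation.ReflTransGen (HStep c D) (hInit c D) M →
      (D ×ˢ D).card ≤ M.card + k → ∃ N, HOutcome c D N by
    exact H (D ×ˢ D).card (hInit c D) Relation.ReflTransGen.refl (Nat.le_add_left _ _)
  intro k
  induction k with
  | zero =>
    intro M hreach hcard
    by_cases hstep : ∃ M', HStep c D M M'
    · obtain ⟨M', hM'⟩ := hstep
      have h1 := step_card hM'
      have h2 := Finset.card_le_card (subset_prod (inv_step (inv_reach hreach) hM'))
      omega
    · push_neg at hstep
      exact ⟨M, hreach, fun M' h => hstep M' h⟩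
  | succ k ih =>
    intro M hreach hcard
    by_cases hstep : ∃ M', HStep c D M M'
    · obtain ⟨M', hM'⟩ := hstep
      have h1 := step_card hM'
      exact ih M' (hreach.tail hM') (by omega)
    · push_neg at hstep
      exact ⟨M, hreach, fun M' h => hstep M' h⟩

lemma exists_lowest {c : ℕ} {D : Finset (ℕ × ℕ)} {M : Finset ((ℕ × ℕ) × (ℕ × ℕ))}
    (hne : ∃ p ∈ D, p.2 = c + 1 ∧ p ∉ matchedBoxes M) :
    ∃ r, (r, c + 1) ∈ D ∧ (r, c + 1) ∉ matchedBoxes M ∧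
      ∀ y ∈ D, y.2 = c + 1 → y ∉ matchedBoxes M → r ≤ y.1 := by
  obtain ⟨p0, hp0, hp0c, hp0u⟩ := hne
  set S := D.filter (fun p => p.2 = c + 1 ∧ p ∉ matchedBoxes M) with hS
  have hSne : (S.image Prod.fst).Nonempty :=
    ⟨p0.1, Finset.mem_image_of_mem _ (Finset.mem_filter.2 ⟨hp0, hp0c, hp0u⟩)⟩
  set r := (S.image Prod.fst).min' hSne with hr
  obtain ⟨x, hxS, hx1⟩ := Finset.mem_image.1 ((S.image Prod.fst).min'_mem hSne)
  obtain ⟨hxD, hxc, hxu⟩ := Finset.mem_filter.1 hxS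
  have hxeq : x = (r, c + 1) := by
    rw [hr, ← hx1, ← hxc, Prod.mk.eta]
  refine ⟨r, hxeq ▸ hxD, hxeq ▸ hxu, ?_⟩
  intro y hy hyc hyu
  exact (S.image Prod.fst).min'_le y.1
    (Finset.mem_image_of_mem _ (Finset.mem_filter.2 ⟨hy, hyc, hyu⟩))

end RectAux
/-- The pairing-based and `M`-based descriptions of `𝚎̄_c` agree: `𝚎̄_c(D) ≠ 0`
iff `M^c(D) > 0`; the two operators coincide; and the row of the lowest
horizontally unpaired box of column `c+1` is the largest row where `M^c(D, ·)`
attains its maximum. -/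
theorem rect_eq_M_description (c : ℕ) (hc : 1 ≤ c) (D : Finset (ℕ × ℕ)) :
    ((∃ D', RectRel c D D') ↔ ∃ r, 0 < Mfun c D r) ∧
    (∀ D', RectRel c D D' ↔ MRectRel c D D') ∧
    (∀ M x, HOutcome c D M → x ∈ D → x.2 = c + 1 → x ∉ matchedBoxes M →
      (∀ y ∈ D, y.2 = c + 1 → y ∉ matchedBoxes M → x.1 ≤ y.1) →
      (∀ r, Mfun c D r ≤ Mfun c D x.1) ∧ ∀ r, x.1 < r → Mfun c D r < Mfun c D x.1) := by
  -- transfer `hlow`-style hypotheses between the two phrasings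
  have lowconv : ∀ (M : Finset ((ℕ × ℕ) × (ℕ × ℕ))) (r : ℕ),
      (∀ r', (r', c + 1) ∈ D → (r', c + 1) ∉ matchedBoxes M → r ≤ r') →
      (∀ y ∈ D, y.2 = c + 1 → y ∉ matchedBoxes M → r ≤ y.1) := by
    intro M r h y hy hyc hyu
    refine h y.1 ?_ ?_
    · rwa [← hyc, Prod.mk.eta]
    · rwa [← hyc, Prod.mk.eta]
  -- extract a lowest unmatched column-(c+1) box from positivity of Mfun
  have getlow : ∀ (M : Finset ((ℕ × ℕ) × (ℕ × ℕ))) (r : ℕ), HOutcome c D M →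
      0 < Mfun c D r →
      ∃ r₁, (r₁, c + 1) ∈ D ∧ (r₁, c + 1) ∉ matchedBoxes M ∧
        ∀ y ∈ D, y.2 = c + 1 → y ∉ matchedBoxes M → r₁ ≤ y.1 := by
    intro M r hO hpos
    have hne : ∃ p ∈ D, p.2 = c + 1 ∧ p ∉ matchedBoxes M := by
      by_contra h
      push_neg at h
      have := RectAux.nonpos (RectAux.inv_reach hO.1)
        (fun p hp hpc => h p hp hpc) r
      omega
    obtain ⟨r₁, h1, h2, h3⟩ := RectAux.exists_lowest hne
    exact ⟨r₁, h1, h2, h3⟩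
  refine ⟨?_, ?_, ?_⟩
  · constructor
    · rintro ⟨D', M, r, hO, hin, hun, hlow, rfl⟩
      refine ⟨r, (RectAux.key hO (r, c + 1) hin rfl hun ?_).1⟩
      exact lowconv M r hlow
    · rintro ⟨r, hr⟩
      obtain ⟨M, hO⟩ := RectAux.exists_outcome c D
      obtain ⟨r₁, h1, h2, h3⟩ := getlow M r hO hr
      exact ⟨insert (r₁, c) (D.erase (r₁, c + 1)), M, r₁, hO, h1, h2,
        fun r' ha hb => h3 (r', c + 1) ha rfl hb, rfl⟩
  · intro D'
    constructor
    · rintro ⟨M, r, hO, hin, hun, hlow, rfl⟩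
      obtain ⟨hpos, hmax, hstrict⟩ :=
        RectAux.key hO (r, c + 1) hin rfl hun (lowconv M r hlow)
      exact ⟨r, hpos, hmax, hstrict, hin, rfl⟩
    · rintro ⟨r₀, hpos, hmax, hstrict, hin, rfl⟩
      obtain ⟨M, hO⟩ := RectAux.exists_outcome c D
      obtain ⟨r₁, h1, h2, h3⟩ := getlow M r₀ hO hpos
      obtain ⟨hpos1, hmax1, hstrict1⟩ := RectAux.key hO (r₁, c + 1) h1 rfl h2 h3
      have heq : r₁ = r₀ := by
        rcases lt_trichotomy r₁ r₀ with h | h | h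
        · exact absurd (lt_of_lt_of_le (hstrict1 r₀ h) (hmax r₁)) (lt_irrefl _)
        · exact h
        · exact absurd (lt_of_lt_of_le (hstrict r₁ h) (hmax1 r₀)) (lt_irrefl _)
      subst heq
      exact ⟨M, r₁, hO, h1, h2, fun r' ha hb => h3 (r', c + 1) ha rfl hb, rfl⟩
  · intro M x hO hx hxc hxu hlow
    obtain ⟨_, hmax, hstrict⟩ := RectAux.key hO x hx hxc hxu hlow
    exact ⟨hmax, hstrict⟩
end
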